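/- arXiv:0903.3528 — 5 statements merged into one kernel-verified Lean document; each statement's English description precedes it below -/
import Mathlib

section
/- If A is an n×n complex Hermitian matrix and 0 < r ≤ 2, then the sum over k of |λ_k(A)|^r is at most the sum over i of (Σ_j |A_{ij}|²)^{r/2}, where λ_1(A),…,λ_n(A) are the (real) eigenvalues of A. -/
/-- **Schatten bound.** If `A` is an `n×n` complex Hermitian matrix and
`0 < r ≤ 2`, then `Σ_k |λ_k(A)|^r ≤ Σ_i (Σ_j |A_{ij}|²)^{r/2}`. -/
theorem stmt1 {n : ℕ} (A : Matrix (Fin n) (Fin n) ℂ) (hA : A.IsHermitian)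
    (r : ℝ) (hr0 : 0 < r) (hr2 : r ≤ 2) :
    ∑ k, |hA.eigenvalues k| ^ r ≤ ∑ i, (∑ j, ‖A i j‖ ^ 2) ^ (r / 2) := by
  classical
  set U : Matrix (Fin n) (Fin n) ℂ := (hA.eigenvectorUnitary : Matrix (Fin n) (Fin n) ℂ) with hU
  set lam : Fin n → ℝ := hA.eigenvalues with hlam
  set D : Matrix (Fin n) (Fin n) ℂ := Matrix.diagonal (fun k => (lam k : ℂ)) with hD
  have hUU : U.conjTranspose * U = (1 : Matrix (Fin n) (Fin n) ℂ) := by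
    simpa [Matrix.star_eq_conjTranspose] using Unitary.coe_star_mul_self hA.eigenvectorUnitary
  have hUU' : U * U.conjTranspose = (1 : Matrix (Fin n) (Fin n) ℂ) := by
    simpa [Matrix.star_eq_conjTranspose] using Unitary.coe_mul_star_self hA.eigenvectorUnitary
  -- rows of U have unit norm
  have hrow : ∀ i, ∑ k, ‖U i k‖ ^ 2 = 1 := by
    intro i
    have := congrArg (fun M => (M i i).re) hUU'
    simpa [Matrix.mul_apply, Matrix.conjTranspose_apply, Matrix.one_apply,
      Complex.re_sum, Complex.mul_conj, ← Complex.sq_norm, ← Complex.ofReal_pow,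
      Complex.ofReal_re, Complex.normSq_apply] using this
  -- columns of U have unit norm
  have hcol : ∀ k, ∑ i, ‖U i k‖ ^ 2 = 1 := by
    intro k
    have := congrArg (fun M => (M k k).re) hUU
    simpa [Matrix.mul_apply, Matrix.conjTranspose_apply, Matrix.one_apply,
      Complex.re_sum, Complex.mul_conj, ← Complex.sq_norm, ← Complex.ofReal_pow,
      Complex.ofReal_re, mul_comm, Complex.normSq_apply] using this
  -- spectral theorem
  have hspec : A = U * D * U.conjTranspose := by
    exact hA.spectral_theorem
  have hAA : A * A = U * Matrix.diagonal (fun k => ((lam k : ℂ)) ^ 2) * U.conjTranspose := by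
    rw [hspec]
    calc U * D * U.conjTranspose * (U * D * U.conjTranspose)
        = U * D * (U.conjTranspose * U) * (D * U.conjTranspose) := by
          simp only [Matrix.mul_assoc]
      _ = U * (D * D) * U.conjTranspose := by
          rw [hUU, Matrix.mul_one]; simp only [Matrix.mul_assoc]
      _ = U * Matrix.diagonal (fun k => ((lam k : ℂ)) ^ 2) * U.conjTranspose := by
          rw [hD, Matrix.diagonal_mul_diagonal]
          congr 1
          congr 1
          ext k
          ring_nf
  -- row sums of |A|² equal weighted sums of eigenvalue squares
  have hfact : ∀ i, ∑ j, ‖A i j‖ ^ 2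
      = ∑ k, ‖U i k‖ ^ 2 * lam k ^ 2 := by
    intro i
    have h1 : (A * A) i i = ((∑ j, ‖A i j‖ ^ 2 : ℝ) : ℂ) := by
      rw [Matrix.mul_apply]
      push_cast
      refine Finset.sum_congr rfl fun j _ => ?_
      have hji : A j i = (starRingEnd ℂ) (A i j) := by
        have := congrFun (congrFun hA j) i
        simpa [Matrix.conjTranspose_apply] using this.symm
      rw [hji, Complex.mul_conj']
    have h2 : (A * A) i i
        = ((∑ k, ‖U i k‖ ^ 2 * lam k ^ 2 : ℝ) : ℂ) := by
      rw [hAA]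
      rw [Matrix.mul_apply]
      push_cast
      refine Finset.sum_congr rfl fun k _ => ?_
      rw [Matrix.mul_apply]
      rw [Finset.sum_eq_single k (fun m _ hm => by simp [Matrix.diagonal_apply_ne _ hm])
        (fun h => absurd (Finset.mem_univ k) h)]
      simp only [Matrix.diagonal_apply_eq, Matrix.conjTranspose_apply]
      rw [show (star (U i k) : ℂ) = (starRingEnd ℂ) (U i k) from rfl,
        show U i k * (lam k : ℂ) ^ 2 * (starRingEnd ℂ) (U i k)
          = (U i k * (starRingEnd ℂ) (U i k)) * (lam k : ℂ) ^ 2 from by ring,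
        Complex.mul_conj']
    have := h1.symm.trans h2
    exact_mod_cast this
  -- the weighted power mean inequality, applied row by row
  have hp1 : (1 : ℝ) ≤ 2 / r := by rw [le_div_iff₀ hr0]; linarith
  have key : ∀ i, ∑ k, ‖U i k‖ ^ 2 * |lam k| ^ r
      ≤ (∑ j, ‖A i j‖ ^ 2) ^ (r / 2) := by
    intro i
    have := Real.arith_mean_le_rpow_mean Finset.univ (fun k => ‖U i k‖ ^ 2)
      (fun k => |lam k| ^ r) (fun k _ => by positivity) (hrow i)
      (fun k _ => by positivity) hp1
    have hz : ∀ k : Fin n, (|lam k| ^ r) ^ (2 / r) = lam k ^ 2 := by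
      intro k
      rw [← Real.rpow_mul (abs_nonneg _),
        show r * (2 / r) = ((2:ℕ):ℝ) from by push_cast; field_simp,
        Real.rpow_natCast, sq_abs]
    have h12 : (1 : ℝ) / (2 / r) = r / 2 := by
      rw [one_div_div]
    rw [h12] at this
    simp only [hz] at this
    calc ∑ k, ‖U i k‖ ^ 2 * |lam k| ^ r
        ≤ (∑ k, ‖U i k‖ ^ 2 * lam k ^ 2) ^ (r / 2) := this
      _ = (∑ j, ‖A i j‖ ^ 2) ^ (r / 2) := by rw [hfact i]
  calc ∑ k, |lam k| ^ r
      = ∑ k, (∑ i, ‖U i k‖ ^ 2) * |lam k| ^ r := by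
        refine Finset.sum_congr rfl fun k _ => ?_
        rw [hcol k, one_mul]
    _ = ∑ i, ∑ k, ‖U i k‖ ^ 2 * |lam k| ^ r := by
        rw [Finset.sum_comm]
        exact Finset.sum_congr rfl fun k _ => by rw [Finset.sum_mul]
    _ ≤ ∑ i, (∑ j, ‖A i j‖ ^ 2) ^ (r / 2) :=
        Finset.sum_le_sum fun i _ => key i
end

section
/- Tauberian-type implication: let μ be a symmetric probability measure on ℝ, 0 < α < 2, and c > 0. If Im m_μ(it) − t^{-1} ∼ −Δ(α) c t^{-α-1} as t → +∞, where Δ(α) = 2α ∫_0^∞ x^{1-α}/(1+x²) dx, then μ((t,∞)) ∼ c t^{-α} as t → +∞. -/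
open MeasureTheory Filter Set
open scoped ENNReal Topology

namespace Stmt10Aux


noncomputable def G (a v : ℝ) : ℝ := v ^ 2 / (a + v ^ 2)

lemma G_nonneg {a : ℝ} (ha : 0 < a) (v : ℝ) : 0 ≤ G a v := by
  unfold G; positivity

lemma G_le_one {a : ℝ} (ha : 0 < a) (v : ℝ) : G a v ≤ 1 := by
  unfold G
  rw [div_le_one (by positivity)]
  linarith

lemma G_measurable (a : ℝ) : Measurable (G a) :=
  (measurable_id.pow_const 2).div (measurable_const.add (measurable_id.pow_const 2))

lemma G_dom {a : ℝ} (ha : 0 < a) (v : ℝ) : |G a v| ≤ max 1 a⁻¹ * G 1 v := by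
  rw [abs_of_nonneg (G_nonneg ha v)]
  have hM1 : (1:ℝ) ≤ max 1 a⁻¹ := le_max_left _ _
  have hMa : 1 ≤ max 1 a⁻¹ * a := by
    calc (1:ℝ) = a⁻¹ * a := by field_simp
    _ ≤ max 1 a⁻¹ * a := by
        have := le_max_right (1:ℝ) a⁻¹
        nlinarith
  unfold G
  rw [mul_div_assoc' , div_le_div_iff₀ (by positivity) (by positivity)]
  nlinarith [sq_nonneg v, sq_nonneg (v^2)]

lemma G_mul {a b : ℝ} (ha : 0 < a) (hb : 0 < b) (hab : a ≠ b) (v : ℝ) :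
    G a v * G b v = (a/(a-b)) * G a v + (b/(b-a)) * G b v := by
  unfold G
  have h1 : a + v ^ 2 ≠ 0 := by positivity
  have h2 : b + v ^ 2 ≠ 0 := by positivity
  have h3 : a - b ≠ 0 := sub_ne_zero.mpr hab
  have h4 : b - a ≠ 0 := sub_ne_zero.mpr (Ne.symm hab)
  field_simp
  ring

lemma G_one_sub {b : ℝ} (hb : 1 ≤ b) (v : ℝ) : |G 1 v - G b v| ≤ (b - 1) * G 1 v := by
  have h1 : (0:ℝ) < 1 + v ^ 2 := by positivity
  have h2 : (0:ℝ) < b + v ^ 2 := by linarith [sq_nonneg v]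
  have heq : G 1 v - G b v = (b - 1) * (G 1 v * (1 / (b + v ^ 2))) := by
    unfold G; field_simp; ring
  have hg0 := G_nonneg one_pos v
  rw [heq, abs_of_nonneg]
  · have hle : G 1 v * (1 / (b + v ^ 2)) ≤ G 1 v * 1 := by
      apply mul_le_mul_of_nonneg_left _ hg0
      rw [div_le_one h2]; nlinarith [sq_nonneg v]
    nlinarith
  · exact mul_nonneg (by linarith) (mul_nonneg hg0 (by positivity))

lemma G_one_mono {v w : ℝ} (hv : 0 ≤ v) (hvw : v ≤ w) : G 1 v ≤ G 1 w := by
  unfold G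
  rw [div_le_div_iff₀ (by positivity) (by positivity)]
  nlinarith

lemma G_one_lt_half {v : ℝ} (hv : 0 ≤ v) (h : v < 1) : G 1 v < 1/2 := by
  unfold G
  rw [div_lt_iff₀ (by positivity)]
  nlinarith

lemma G_half_lt {v : ℝ} (h : 1 < v) : 1/2 < G 1 v := by
  unfold G
  rw [lt_div_iff₀ (by positivity)]
  nlinarith

-- product approximation bound
lemma G_prod_approx {δ : ℝ} (hδ : 0 < δ) (k : ℕ) (v : ℝ) :
    |G 1 v ^ (k+1) - ∏ i ∈ Finset.range (k+1), G (1 + i * δ) v| ≤ ((k+1)^2 * δ) * G 1 v := by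
  induction k with
  | zero =>
    have hg0 := G_nonneg one_pos v
    simp only [Finset.prod_range_one, Nat.cast_zero, zero_mul, add_zero, pow_one, zero_add,
      Nat.cast_one]
    rw [sub_self, abs_zero]
    nlinarith
  | succ k ih =>
    have hg0 := G_nonneg one_pos v
    have hg1 := G_le_one one_pos v
    have hb : (1:ℝ) ≤ 1 + (k+1 : ℕ) * δ := by
      have : (0:ℝ) ≤ ((k+1 : ℕ):ℝ) * δ := by positivity
      linarith
    have hGb0 : 0 ≤ G (1 + (k+1:ℕ) * δ) v := G_nonneg (by positivity) v
    have hGb1 : G (1 + (k+1:ℕ) * δ) v ≤ 1 := G_le_one (by positivity) v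
    have hprod0 : 0 ≤ ∏ i ∈ Finset.range (k+1), G (1 + i * δ) v :=
      Finset.prod_nonneg fun i _ => G_nonneg (by positivity) v
    have hprod1 : ∏ i ∈ Finset.range (k+1), G (1 + i * δ) v ≤ 1 :=
      Finset.prod_le_one (fun i _ => G_nonneg (by positivity) v)
        (fun i _ => G_le_one (by positivity) v)
    rw [Finset.prod_range_succ]
    have hgpow1 : G 1 v ^ (k+1) ≤ 1 := pow_le_one₀ hg0 hg1
    have hgpow0 : 0 ≤ G 1 v ^ (k+1) := pow_nonneg hg0 _
    have key : G 1 v ^ (k+1+1) - (∏ i ∈ Finset.range (k+1), G (1 + i * δ) v) * G (1 + (k+1:ℕ) * δ) v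
        = G 1 v ^ (k+1) * (G 1 v - G (1 + (k+1:ℕ) * δ) v)
          + (G 1 v ^ (k+1) - ∏ i ∈ Finset.range (k+1), G (1 + i * δ) v) * G (1 + (k+1:ℕ) * δ) v := by
      ring
    rw [key]
    have h1 : |G 1 v ^ (k+1) * (G 1 v - G (1 + (k+1:ℕ) * δ) v)| ≤ ((k+1:ℕ) * δ) * G 1 v := by
      rw [abs_mul, abs_of_nonneg hgpow0]
      have := G_one_sub hb v
      have h2 : |G 1 v - G (1 + (k+1:ℕ)*δ) v| ≤ ((k+1:ℕ) * δ) * G 1 v := by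
        calc |G 1 v - G (1 + (k+1:ℕ)*δ) v| ≤ (1 + (k+1:ℕ)*δ - 1) * G 1 v := this
        _ = ((k+1:ℕ) * δ) * G 1 v := by ring
      calc G 1 v ^ (k+1) * |G 1 v - G (1 + (k+1:ℕ)*δ) v| ≤ 1 * (((k+1:ℕ) * δ) * G 1 v) := by
            apply mul_le_mul hgpow1 h2 (abs_nonneg _) one_pos.le
      _ = ((k+1:ℕ) * δ) * G 1 v := by ring
    have h2 : |(G 1 v ^ (k+1) - ∏ i ∈ Finset.range (k+1), G (1 + i * δ) v) * G (1 + (k+1:ℕ) * δ) v|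
        ≤ ((k+1)^2 * δ) * G 1 v := by
      rw [abs_mul, abs_of_nonneg hGb0]
      calc |G 1 v ^ (k+1) - ∏ i ∈ Finset.range (k+1), G (1 + i * δ) v| * G (1 + (k+1:ℕ) * δ) v
          ≤ (((k+1)^2 * δ) * G 1 v) * 1 := by
            apply mul_le_mul ih hGb1 hGb0 (by positivity)
      _ = ((k+1)^2 * δ) * G 1 v := by ring
    have habs := (abs_add_le _ _).trans (add_le_add h1 h2)
    refine habs.trans ?_
    push_cast
    nlinarith [mul_nonneg hδ.le hg0]




lemma weight_int {α a : ℝ} (hα0 : 0 < α) (hα2 : α < 2) (ha : 0 < a) :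
    IntegrableOn (fun v : ℝ => v ^ (1-α) / (a + v^2)) (Ioi 0) := by
  have hmeas : Measurable (fun v : ℝ => v ^ (1-α) / (a + v^2)) := by fun_prop
  have h1 : IntegrableOn (fun v : ℝ => v ^ (1-α) / (a + v^2)) (Ioc 0 1) := by
    have hint : IntegrableOn (fun v : ℝ => v ^ (1-α) * a⁻¹) (Ioc 0 1) := by
      apply Integrable.mul_const
      have := intervalIntegral.intervalIntegrable_rpow' (a := 0) (b := 1)
        (show (-1:ℝ) < 1 - α by linarith)
      rwa [intervalIntegrable_iff_integrableOn_Ioc_of_le zero_le_one] at this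
    apply Integrable.mono' hint hmeas.aestronglyMeasurable.restrict
    rw [ae_restrict_iff' measurableSet_Ioc]
    filter_upwards with v hv
    have hv0 : 0 < v := hv.1
    have hrp : 0 ≤ v ^ (1-α) := Real.rpow_nonneg hv0.le _
    rw [Real.norm_eq_abs, abs_of_nonneg (by positivity)]
    rw [div_le_iff₀ (by positivity)]
    calc v ^ (1-α) = v ^ (1-α) * a⁻¹ * a := by field_simp
    _ ≤ v ^ (1-α) * a⁻¹ * (a + v^2) := by
        apply mul_le_mul_of_nonneg_left (by nlinarith [sq_nonneg v]) (by positivity)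
  have h2 : IntegrableOn (fun v : ℝ => v ^ (1-α) / (a + v^2)) (Ioi 1) := by
    have hint : IntegrableOn (fun v : ℝ => v ^ (-α-1)) (Ioi 1) :=
      integrableOn_Ioi_rpow_of_lt (by linarith) one_pos
    apply Integrable.mono' hint hmeas.aestronglyMeasurable.restrict
    rw [ae_restrict_iff' measurableSet_Ioi]
    filter_upwards with v hv
    have hv0 : (0:ℝ) < 1 := one_pos
    have hv1 : (1:ℝ) < v := hv
    have hvpos : 0 < v := lt_trans one_pos hv1
    have hrp : 0 ≤ v ^ (1-α) := Real.rpow_nonneg hvpos.le _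
    rw [Real.norm_eq_abs, abs_of_nonneg (by positivity)]
    have key : v ^ (1-α) / (a + v^2) ≤ v ^ (1-α) / v^2 := by
      apply div_le_div_of_nonneg_left hrp (by positivity)
      nlinarith
    refine key.trans (le_of_eq ?_)
    rw [← Real.rpow_natCast v 2, ← Real.rpow_sub hvpos]
    norm_num
    rw [show (1:ℝ)-α-2 = -α-1 by ring]
  have : Ioi (0:ℝ) = Ioc 0 1 ∪ Ioi 1 := (Ioc_union_Ioi_eq_Ioi zero_le_one).symm
  rw [this]
  exact h1.union h2

lemma weight_pos {α : ℝ} (hα0 : 0 < α) (hα2 : α < 2) :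
    0 < ∫ v in Ioi (0:ℝ), v ^ (1-α) / (1 + v^2) := by
  rw [setIntegral_pos_iff_support_of_nonneg_ae]
  · have hsub : Ioi (0:ℝ) ⊆ (Function.support fun v : ℝ => v ^ (1-α) / (1 + v^2)) ∩ Ioi 0 := by
      intro v hv
      have hv0 : (0:ℝ) < v := hv
      refine ⟨?_, hv⟩
      simp only [Function.mem_support]
      have : 0 < v ^ (1-α) / (1 + v^2) := by
        apply div_pos (Real.rpow_pos_of_pos hv0 _) (by positivity)
      exact this.ne'
    calc (0:ℝ≥0∞) < volume (Ioi (0:ℝ)) := by simp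
    _ ≤ _ := measure_mono hsub
  · filter_upwards [ae_restrict_mem measurableSet_Ioi] with v hv
    have hv0 : (0:ℝ) < v := hv
    simp only [Pi.zero_apply]
    positivity
  · exact weight_int hα0 hα2 one_pos

lemma weight_scale {α a : ℝ} (hα0 : 0 < α) (hα2 : α < 2) (ha : 0 < a) :
    ∫ v in Ioi (0:ℝ), v ^ (1-α) / (a + v^2)
      = (Real.sqrt a) ^ (-α) * ∫ v in Ioi (0:ℝ), v ^ (1-α) / (1 + v^2) := by
  set r := Real.sqrt a with hr
  have hrpos : 0 < r := Real.sqrt_pos.mpr ha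
  have hr2 : r ^ 2 = a := Real.sq_sqrt ha.le
  have key := integral_comp_mul_left_Ioi (fun v : ℝ => v ^ (1-α) / (a + v^2)) 0 hrpos
  rw [mul_zero] at key
  have key2 : ∫ v in Ioi (0:ℝ), v ^ (1-α) / (a + v^2)
      = r * ∫ x in Ioi (0:ℝ), (fun v : ℝ => v ^ (1-α) / (a + v^2)) (r * x) := by
    rw [key, smul_eq_mul, ← mul_assoc, mul_inv_cancel₀ hrpos.ne', one_mul]
  have congr1 : ∫ x in Ioi (0:ℝ), (fun v : ℝ => v ^ (1-α) / (a + v^2)) (r * x)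
      = ∫ x in Ioi (0:ℝ), (r ^ (1-α) * a⁻¹) * (x ^ (1-α) / (1 + x^2)) := by
    apply setIntegral_congr_fun measurableSet_Ioi
    intro x hx
    have hx0 : (0:ℝ) < x := hx
    simp only
    rw [Real.mul_rpow hrpos.le hx0.le]
    rw [mul_pow, hr2]
    have h1 : a + a * x ^ 2 = a * (1 + x^2) := by ring
    rw [h1]
    field_simp
    try ring
  rw [key2, congr1, integral_const_mul]
  have : r * (r ^ (1-α) * a⁻¹ * ∫ x in Ioi (0:ℝ), x ^ (1-α) / (1 + x^2))
      = (r * r ^ (1-α) * a⁻¹) * ∫ x in Ioi (0:ℝ), x ^ (1-α) / (1 + x^2) := by ring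
  rw [this]
  congr 1
  rw [← hr2, ← Real.rpow_natCast r 2]
  nth_rewrite 1 [← Real.rpow_one r]
  rw [← Real.rpow_neg hrpos.le, ← Real.rpow_add hrpos, ← Real.rpow_add hrpos]
  norm_num
  rw [show (1:ℝ)+(1-α)+-2 = -α by ring]

lemma weight_tail {α b : ℝ} (hα0 : 0 < α) (hb : 0 < b) :
    ∫ v in Ioi b, v ^ (-α-1) = b ^ (-α) / α := by
  rw [integral_Ioi_rpow_of_lt (by linarith) hb]
  rw [show -α-1+1 = -α by ring]
  rw [div_eq_div_iff (by linarith) (by positivity)]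
  ring




noncomputable def LL (α K : ℝ) (f : ℝ → ℝ) : ℝ := K * ∫ v in Ioi (0:ℝ), f v * v ^ (-α-1)

def PP (ν : Measure ℝ) (α K : ℝ) (f : ℝ → ℝ) : Prop :=
  Measurable f ∧ (∃ C : ℝ, 0 ≤ C ∧ ∀ v, |f v| ≤ C * G 1 v) ∧
  IntegrableOn (fun v => f v * v ^ (-α-1)) (Ioi 0) ∧
  Tendsto (fun t : ℝ => t ^ α * ∫ u, f (u/t) ∂ν) atTop (𝓝 (LL α K f))

variable {ν : Measure ℝ} [IsFiniteMeasure ν] {α K : ℝ}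

lemma int_comp {f : ℝ → ℝ} (hm : Measurable f) {C : ℝ} (hC0 : 0 ≤ C)
    (hC : ∀ v, |f v| ≤ C * G 1 v) (t : ℝ) : Integrable (fun u => f (u/t)) ν := by
  apply Integrable.mono' (integrable_const C)
    ((hm.comp (measurable_id.div_const t)).aestronglyMeasurable)
  filter_upwards with u
  rw [Real.norm_eq_abs]
  calc |f (u/t)| ≤ C * G 1 (u/t) := hC _
  _ ≤ C * 1 := by
      apply mul_le_mul_of_nonneg_left (G_le_one one_pos _) hC0
  _ = C := mul_one C

lemma PP_zero : PP ν α K (fun _ => 0) := by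
  refine ⟨measurable_const, ⟨0, le_refl 0, fun v => by simp⟩, by simp, ?_⟩
  have : LL α K (fun _ : ℝ => (0:ℝ)) = 0 := by
    unfold LL; simp
  rw [this]
  simpa using tendsto_const_nhds

lemma PP_add {f h : ℝ → ℝ} (hf : PP ν α K f) (hh : PP ν α K h) :
    PP ν α K (fun v => f v + h v) := by
  obtain ⟨m1, ⟨C1, hC10, hC1⟩, i1, T1⟩ := hf
  obtain ⟨m2, ⟨C2, hC20, hC2⟩, i2, T2⟩ := hh
  refine ⟨m1.add m2, ⟨C1 + C2, by linarith, fun v => ?_⟩, ?_, ?_⟩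
  · calc |f v + h v| ≤ |f v| + |h v| := abs_add_le _ _
    _ ≤ C1 * G 1 v + C2 * G 1 v := add_le_add (hC1 v) (hC2 v)
    _ = (C1 + C2) * G 1 v := by ring
  · have : (fun v => (f v + h v) * v ^ (-α-1))
        = fun v => f v * v ^ (-α-1) + h v * v ^ (-α-1) := by
      funext v; ring
    rw [this]
    exact i1.add i2
  · have hLL : LL α K (fun v => f v + h v) = LL α K f + LL α K h := by
      unfold LL
      rw [← mul_add]
      congr 1
      rw [← integral_add i1 i2]
      congr 1
      funext v; ring
    rw [hLL]
    have hfun : ∀ t : ℝ, t ^ α * ∫ u, (f (u/t) + h (u/t)) ∂ν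
        = t ^ α * ∫ u, f (u/t) ∂ν + t ^ α * ∫ u, h (u/t) ∂ν := by
      intro t
      rw [integral_add (int_comp m1 hC10 hC1 t) (int_comp m2 hC20 hC2 t), mul_add]
    exact (T1.add T2).congr (fun t => (hfun t).symm)

lemma PP_smul {f : ℝ → ℝ} (r : ℝ) (hf : PP ν α K f) : PP ν α K (fun v => r * f v) := by
  obtain ⟨m1, ⟨C1, hC10, hC1⟩, i1, T1⟩ := hf
  refine ⟨measurable_const.mul m1, ⟨|r| * C1, by positivity, fun v => ?_⟩, ?_, ?_⟩
  · rw [abs_mul, mul_assoc]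
    exact mul_le_mul_of_nonneg_left (hC1 v) (abs_nonneg r)
  · have : (fun v => (r * f v) * v ^ (-α-1)) = fun v => r * (f v * v ^ (-α-1)) := by
      funext v; ring
    rw [this]
    exact i1.const_mul r
  · have hLL : LL α K (fun v => r * f v) = r * LL α K f := by
      unfold LL
      rw [show (fun v => (r * f v) * v ^ (-α-1)) = fun v => r * (f v * v ^ (-α-1)) by
        funext v; ring]
      rw [integral_const_mul]
      ring
    rw [hLL]
    have hfun : ∀ t : ℝ, t ^ α * ∫ u, r * f (u/t) ∂ν
        = r * (t ^ α * ∫ u, f (u/t) ∂ν) := by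
      intro t
      rw [integral_const_mul]
      ring
    exact (T1.const_mul r).congr (fun t => (hfun t).symm)

lemma PP_sum {n : ℕ} {F : ℕ → ℝ → ℝ} (hF : ∀ i, i < n → PP ν α K (F i)) :
    PP ν α K (fun v => ∑ i ∈ Finset.range n, F i v) := by
  induction n with
  | zero => simpa using PP_zero
  | succ n ih =>
    have h1 : PP ν α K (fun v => ∑ i ∈ Finset.range n, F i v) :=
      ih (fun i hi => hF i (Nat.lt_succ_of_lt hi))
    have h2 : PP ν α K (F n) := hF n (Nat.lt_succ_self n)
    have := PP_add h1 h2
    simpa [Finset.sum_range_succ] using this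






-- G 1 v * v^(-α-1) = v^(1-α)/(1+v²) for v > 0
lemma G_weight_eq {v : ℝ} (hv : 0 < v) (a : ℝ) :
    G a v * v ^ (-α-1) = v ^ (1-α) / (a + v^2) := by
  unfold G
  rw [div_mul_eq_mul_div, mul_comm (v^2)]
  congr 1
  rw [← Real.rpow_natCast v 2, ← Real.rpow_add hv]
  congr 1
  push_cast
  ring

-- domination integrability: |f| ≤ C G1 → IntegrableOn (f · weight) (Ioi 0)
lemma dom_weight_int (hα0 : 0 < α) (hα2 : α < 2) {f : ℝ → ℝ} (hm : Measurable f)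
    {C : ℝ} (hC : ∀ v, |f v| ≤ C * G 1 v) :
    IntegrableOn (fun v => f v * v ^ (-α-1)) (Ioi 0) := by
  have hint : IntegrableOn (fun v : ℝ => C * (v ^ (1-α) / (1 + v^2))) (Ioi 0) :=
    (weight_int hα0 hα2 one_pos).const_mul C
  apply Integrable.mono' hint
  · exact (hm.mul (by fun_prop : Measurable (fun v : ℝ => v ^ (-α-1)))).aestronglyMeasurable.restrict
  · rw [ae_restrict_iff' measurableSet_Ioi]
    filter_upwards with v hv
    have hv0 : (0:ℝ) < v := hv
    rw [Real.norm_eq_abs, abs_mul, abs_of_nonneg (Real.rpow_nonneg hv0.le _)]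
    calc |f v| * v ^ (-α-1) ≤ (C * G 1 v) * v ^ (-α-1) :=
        mul_le_mul_of_nonneg_right (hC v) (Real.rpow_nonneg hv0.le _)
    _ = C * (G 1 v * v ^ (-α-1)) := by ring
    _ = C * (v ^ (1-α) / (1 + v^2)) := by rw [G_weight_eq hv0]

lemma LL_mono (hK : 0 ≤ K) {f h : ℝ → ℝ}
    (hif : IntegrableOn (fun v => f v * v ^ (-α-1)) (Ioi 0))
    (hih : IntegrableOn (fun v => h v * v ^ (-α-1)) (Ioi 0))
    (hle : ∀ v, 0 < v → f v ≤ h v) : LL α K f ≤ LL α K h := by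
  unfold LL
  apply mul_le_mul_of_nonneg_left _ hK
  apply setIntegral_mono_on hif hih measurableSet_Ioi
  intro v hv
  have hv0 : (0:ℝ) < v := hv
  exact mul_le_mul_of_nonneg_right (hle v hv0) (Real.rpow_nonneg hv0.le _)

lemma PP_approx (hα0 : 0 < α) (hα2 : α < 2) (hK : 0 ≤ K)
    (hgg : PP ν α K (G 1)) {f : ℝ → ℝ} (hm : Measurable f)
    {C : ℝ} (hC0 : 0 ≤ C) (hC : ∀ v, |f v| ≤ C * G 1 v)
    (happ : ∀ ε : ℝ, 0 < ε → ∃ f', PP ν α K f' ∧ ∀ v, |f v - f' v| ≤ ε * G 1 v) :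
    PP ν α K f := by
  have hif : IntegrableOn (fun v => f v * v ^ (-α-1)) (Ioi 0) := dom_weight_int hα0 hα2 hm hC
  set M0 : ℝ := ∫ v in Ioi (0:ℝ), G 1 v * v ^ (-α-1) with hM0
  have hiG : IntegrableOn (fun v => G 1 v * v ^ (-α-1)) (Ioi 0) := hgg.2.2.1
  have hM0nn : 0 ≤ M0 := by
    apply setIntegral_nonneg measurableSet_Ioi
    intro v hv
    exact mul_nonneg (G_nonneg one_pos v) (Real.rpow_nonneg (le_of_lt hv) _)
  refine ⟨hm, ⟨C, hC0, hC⟩, hif, ?_⟩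
  rw [Metric.tendsto_nhds]
  intro ε hε
  -- choose ε'
  set ε' : ℝ := min 1 (ε / (2 * (2 * K * M0 + 2))) with hε'def
  have hden : 0 < 2 * K * M0 + 2 := by positivity
  have hε'pos : 0 < ε' := lt_min one_pos (by positivity)
  have hε'le : ε' * (2 * K * M0 + 1) ≤ ε / 2 := by
    have h1 : ε' ≤ ε / (2 * (2 * K * M0 + 2)) := min_le_right _ _
    calc ε' * (2 * K * M0 + 1) ≤ (ε / (2 * (2 * K * M0 + 2))) * (2 * K * M0 + 2) := by
          apply mul_le_mul h1 (by linarith) (by positivity) (by positivity)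
    _ = ε / 2 := by field_simp
  obtain ⟨f', hPP', happrox⟩ := happ ε' hε'pos
  obtain ⟨m', ⟨C', hC'0, hC'⟩, hif', T'⟩ := hPP'
  -- (a) |LL f - LL f'| ≤ K * (ε' * M0)
  have ha : |LL α K f - LL α K f'| ≤ K * (ε' * M0) := by
    unfold LL
    rw [← mul_sub, abs_mul, abs_of_nonneg hK]
    apply mul_le_mul_of_nonneg_left _ hK
    rw [← integral_sub hif hif']
    have hbound : |∫ v in Ioi (0:ℝ), (f v * v ^ (-α-1) - f' v * v ^ (-α-1))|
        ≤ ∫ v in Ioi (0:ℝ), ε' * (G 1 v * v ^ (-α-1)) := by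
      rw [← Real.norm_eq_abs]
      refine le_trans (norm_integral_le_integral_norm _) ?_
      simp only [Real.norm_eq_abs]
      apply setIntegral_mono_on ((hif.sub hif').abs) (hiG.const_mul ε') measurableSet_Ioi
      intro v hv
      have hv0 : (0:ℝ) < v := hv
      simp only [Pi.sub_apply]
      rw [show f v * v ^ (-α-1) - f' v * v ^ (-α-1) = (f v - f' v) * v ^ (-α-1) by ring]
      rw [abs_mul, abs_of_nonneg (Real.rpow_nonneg hv0.le _)]
      rw [← mul_assoc]
      exact mul_le_mul_of_nonneg_right (happrox v) (Real.rpow_nonneg hv0.le _)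
    rw [integral_const_mul] at hbound
    exact hbound
  have hTG := hgg.2.2.2
  have hb : ∀ᶠ t : ℝ in atTop, t ^ α * ∫ u, G 1 (u/t) ∂ν ≤ K * M0 + 1 := by
    have : LL α K (G 1) = K * M0 := rfl
    have h2 := hTG.eventually (eventually_le_nhds (show LL α K (G 1) < LL α K (G 1) + 1 by linarith))
    filter_upwards [h2] with t ht
    rw [this] at ht
    linarith
  have hc := T'.eventually (Metric.ball_mem_nhds (LL α K f') (by positivity : (0:ℝ) < ε/4))
  filter_upwards [hb, hc, eventually_ge_atTop (1:ℝ)] with t htb htc ht1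
  have ht0 : (0:ℝ) < t := lt_of_lt_of_le one_pos ht1
  have htα : (0:ℝ) ≤ t ^ α := Real.rpow_nonneg ht0.le _
  -- integrals
  have intf : Integrable (fun u => f (u/t)) ν := int_comp hm hC0 hC t
  have intf' : Integrable (fun u => f' (u/t)) ν := int_comp m' hC'0 hC' t
  have intG : Integrable (fun u => G 1 (u/t)) ν := int_comp (G_measurable 1)
    (zero_le_one) (fun v => by rw [abs_of_nonneg (G_nonneg one_pos v)]; simp) t
  have hbt : |t ^ α * ∫ u, f (u/t) ∂ν - t ^ α * ∫ u, f' (u/t) ∂ν|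
      ≤ ε' * (K * M0 + 1) := by
    rw [← mul_sub, abs_mul, abs_of_nonneg htα, ← integral_sub intf intf']
    have h1 : |∫ u, (f (u/t) - f' (u/t)) ∂ν| ≤ ∫ u, ε' * G 1 (u/t) ∂ν := by
      rw [← Real.norm_eq_abs]
      refine le_trans (norm_integral_le_integral_norm _) ?_
      simp only [Real.norm_eq_abs]
      apply integral_mono (intf.sub intf').abs (intG.const_mul ε')
      intro u
      simpa using happrox (u/t)
    calc t ^ α * |∫ u, (f (u/t) - f' (u/t)) ∂ν| ≤ t ^ α * ∫ u, ε' * G 1 (u/t) ∂ν :=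
        mul_le_mul_of_nonneg_left h1 htα
    _ = ε' * (t ^ α * ∫ u, G 1 (u/t) ∂ν) := by rw [integral_const_mul]; ring
    _ ≤ ε' * (K * M0 + 1) := mul_le_mul_of_nonneg_left htb hε'pos.le
  rw [Real.dist_eq]
  rw [Real.dist_eq] at htc
  calc |t ^ α * ∫ u, f (u/t) ∂ν - LL α K f|
      ≤ |t ^ α * ∫ u, f (u/t) ∂ν - t ^ α * ∫ u, f' (u/t) ∂ν|
        + |t ^ α * ∫ u, f' (u/t) ∂ν - LL α K f'| + |LL α K f' - LL α K f| := by
        have := abs_sub_le (t ^ α * ∫ u, f (u/t) ∂ν) (t ^ α * ∫ u, f' (u/t) ∂ν) (LL α K f)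
        have h2 := abs_sub_le (t ^ α * ∫ u, f' (u/t) ∂ν) (LL α K f') (LL α K f)
        linarith
  _ ≤ ε' * (K * M0 + 1) + ε/4 + K * (ε' * M0) := by
      rw [abs_sub_comm] at ha
      exact add_le_add (add_le_add hbt htc.le) ha
  _ < ε := by
      have hcomb : ε' * (K * M0 + 1) + K * (ε' * M0) = ε' * (2 * K * M0 + 1) := by ring
      linarith
  





lemma PP_span {s : Set ℝ} (hG : ∀ a ∈ s, PP ν α K (G a))
    {f : ℝ → ℝ} (hf : f ∈ Submodule.span ℝ (G '' s)) : PP ν α K f := by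
  induction hf using Submodule.span_induction with
  | mem x hx =>
    obtain ⟨a, ha, rfl⟩ := hx
    exact hG a ha
  | zero => exact PP_zero
  | add x y hx hy px py => exact PP_add px py
  | smul r x hx px => exact PP_smul r px

lemma mul_G_span {s : Set ℝ} (hs : s ⊆ Ioi 0) {b : ℝ} (hb : 0 < b) (hbs : b ∉ s)
    {f : ℝ → ℝ} (hf : f ∈ Submodule.span ℝ (G '' s)) :
    (fun v => G b v * f v) ∈ Submodule.span ℝ (G '' (insert b s)) := by
  induction hf using Submodule.span_induction with
  | mem x hx =>
    obtain ⟨a, ha, rfl⟩ := hx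
    have hane : a ≠ b := fun h => hbs (h ▸ ha)
    have ha0 : 0 < a := hs ha
    have heq : (fun v => G b v * G a v)
        = (a/(a-b)) • G a + (b/(b-a)) • G b := by
      funext v
      simp only [Pi.add_apply, Pi.smul_apply, smul_eq_mul]
      rw [mul_comm (G b v) (G a v)]
      exact G_mul ha0 hb hane v
    rw [heq]
    apply Submodule.add_mem
    · exact Submodule.smul_mem _ _ (Submodule.subset_span ⟨a, mem_insert_of_mem _ ha, rfl⟩)
    · exact Submodule.smul_mem _ _ (Submodule.subset_span ⟨b, mem_insert _ _, rfl⟩)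
  | zero =>
    have : (fun v : ℝ => G b v * (0 : ℝ → ℝ) v) = 0 := by funext v; simp
    rw [this]
    exact Submodule.zero_mem _
  | add x y hx hy px py =>
    have : (fun v => G b v * (x + y) v) = (fun v => G b v * x v) + (fun v => G b v * y v) := by
      funext v; simp [mul_add]
    rw [this]
    exact Submodule.add_mem _ px py
  | smul r x hx px =>
    have : (fun v => G b v * (r • x) v) = r • (fun v => G b v * x v) := by
      funext v; simp only [Pi.smul_apply, smul_eq_mul]; ring
    rw [this]
    exact Submodule.smul_mem _ r px

lemma prod_mem {δ : ℝ} (hδ : 0 < δ) (k : ℕ) :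
    (fun v => ∏ i ∈ Finset.range (k+1), G (1 + i * δ) v)
      ∈ Submodule.span ℝ (G '' {a : ℝ | 0 < a ∧ a ≤ 1 + k * δ}) := by
  induction k with
  | zero =>
    have heq : (fun v => ∏ i ∈ Finset.range 1, G (1 + i * δ) v) = G 1 := by
      funext v; simp
    rw [heq]
    refine Submodule.subset_span ⟨1, ⟨one_pos, ?_⟩, rfl⟩
    push_cast
    linarith
  | succ k ih =>
    have hstep : (fun v => ∏ i ∈ Finset.range (k+1+1), G (1 + i*δ) v)
        = fun v => G (1 + ((k:ℝ)+1)*δ) v * ∏ i ∈ Finset.range (k+1), G (1 + i*δ) v := by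
      funext v
      rw [Finset.prod_range_succ]
      push_cast
      ring
    rw [hstep]
    have hsub : {a : ℝ | 0 < a ∧ a ≤ 1 + k * δ} ⊆ Ioi 0 := fun a ha => ha.1
    have hb0 : (0:ℝ) < 1 + ((k:ℝ)+1)*δ := by positivity
    have hbs : (1 + ((k:ℝ)+1)*δ) ∉ {a : ℝ | 0 < a ∧ a ≤ 1 + k * δ} := by
      intro h
      have := h.2
      nlinarith
    have hmem := mul_G_span hsub hb0 hbs ih
    refine Submodule.span_mono (Set.image_mono ?_) hmem
    intro a ha
    rcases ha with rfl | ha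
    · exact ⟨hb0, by push_cast; linarith⟩
    · exact ⟨ha.1, by push_cast; nlinarith [ha.2, hδ.le, Nat.cast_nonneg (α := ℝ) k]⟩

lemma PP_gpow (hα0 : 0 < α) (hα2 : α < 2) (hK : 0 ≤ K)
    (hGall : ∀ a : ℝ, 0 < a → PP ν α K (G a)) (k : ℕ) :
    PP ν α K (fun v => G 1 v ^ (k+1)) := by
  apply PP_approx hα0 hα2 hK (hGall 1 one_pos) ((G_measurable 1).pow_const (k+1))
    (zero_le_one) (C := 1)
  · intro v
    have h0 := G_nonneg one_pos v
    have h1 := G_le_one one_pos v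
    rw [abs_of_nonneg (pow_nonneg h0 _), one_mul]
    calc G 1 v ^ (k+1) = G 1 v ^ k * G 1 v := by rw [pow_succ]
    _ ≤ 1 * G 1 v := mul_le_mul_of_nonneg_right (pow_le_one₀ h0 h1) h0
    _ = G 1 v := one_mul _
  · intro ε hε
    set δ : ℝ := ε / ((k+1)^2) with hδdef
    have hδpos : 0 < δ := by positivity
    refine ⟨fun v => ∏ i ∈ Finset.range (k+1), G (1 + i * δ) v, ?_, ?_⟩
    · apply PP_span (s := {a : ℝ | 0 < a ∧ a ≤ 1 + k * δ})
        (fun a ha => hGall a ha.1) (prod_mem hδpos k)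
    · intro v
      have := G_prod_approx hδpos k v
      have heq : ((k:ℝ)+1)^2 * δ = ε := by
        rw [hδdef]
        field_simp
      calc |G 1 v ^ (k+1) - ∏ i ∈ Finset.range (k+1), G (1 + i * δ) v|
          ≤ (((k:ℝ)+1)^2 * δ) * G 1 v := by exact_mod_cast this
      _ = ε * G 1 v := by rw [heq]

lemma PP_gpoly (hα0 : 0 < α) (hα2 : α < 2) (hK : 0 ≤ K)
    (hGall : ∀ a : ℝ, 0 < a → PP ν α K (G a)) (p : Polynomial ℝ) :
    PP ν α K (fun v => G 1 v * p.eval (G 1 v)) := by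
  have heq : (fun v => G 1 v * p.eval (G 1 v))
      = fun v => ∑ i ∈ Finset.range (p.natDegree + 1), p.coeff i * G 1 v ^ (i+1) := by
    funext v
    rw [Polynomial.eval_eq_sum_range, Finset.mul_sum]
    apply Finset.sum_congr rfl
    intro i _
    ring
  rw [heq]
  exact PP_sum (fun i _ => PP_smul _ (PP_gpow hα0 hα2 hK hGall i))






/-! ### clamp functions -/

noncomputable def chi (c1 c2 s : ℝ) : ℝ := min 1 (max 0 ((s - c1)/(c2 - c1)))

variable {c1 c2 : ℝ}


lemma chi_nonneg (s : ℝ) : 0 ≤ chi c1 c2 s :=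
  le_min zero_le_one (le_max_left 0 _)

lemma chi_le_one (s : ℝ) : chi c1 c2 s ≤ 1 := min_le_left _ _

lemma chi_eq_zero (hcc : c1 < c2) {s : ℝ} (hs : s ≤ c1) : chi c1 c2 s = 0 := by
  unfold chi
  rw [max_eq_left (div_nonpos_of_nonpos_of_nonneg (by linarith) (by linarith))]
  exact min_eq_right zero_le_one

lemma chi_eq_one (hcc : c1 < c2) {s : ℝ} (hs : c2 ≤ s) : chi c1 c2 s = 1 := by
  unfold chi
  apply min_eq_left
  apply le_max_of_le_right
  rw [le_div_iff₀ (by linarith)]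
  linarith

lemma chi_le_scaled (hc1 : 0 ≤ c1) (hcc : c1 < c2) {s : ℝ} (hs : 0 ≤ s) :
    chi c1 c2 s ≤ (c2 - c1)⁻¹ * s := by
  unfold chi
  apply (min_le_right _ _).trans
  apply max_le (mul_nonneg (inv_nonneg.mpr (by linarith)) hs)
  rw [div_le_iff₀ (by linarith), mul_comm (c2-c1)⁻¹, mul_assoc,
    inv_mul_cancel₀ (by linarith : c2 - c1 ≠ 0), mul_one]
  linarith

lemma chi_cont : Continuous (chi c1 c2) :=
  continuous_const.min (continuous_const.max ((continuous_id.sub continuous_const).div_const _))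

lemma chi_factor (hc1 : 0 < c1) (hcc : c1 < c2) {s : ℝ} (hs : 0 ≤ s) :
    chi c1 c2 s = s * (chi c1 c2 s * (max s c1)⁻¹) := by
  rcases le_or_gt s c1 with h | h
  · rw [chi_eq_zero hcc h]
    ring
  · rw [max_eq_left h.le]
    have hs0 : s ≠ 0 := ne_of_gt (hc1.trans h)
    field_simp

/-! ### Weierstrass -/

lemma exists_poly (F : C(Icc (0:ℝ) 1, ℝ)) {ε : ℝ} (hε : 0 < ε) :
    ∃ p : Polynomial ℝ, ∀ s : Icc (0:ℝ) 1, |F s - p.eval (s:ℝ)| ≤ ε := by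
  have htop := polynomialFunctions_closure_eq_top 0 1
  have hF : F ∈ (polynomialFunctions (Icc (0:ℝ) 1)).topologicalClosure := by
    rw [htop]; trivial
  have hcl : F ∈ closure (polynomialFunctions (Icc (0:ℝ) 1) : Set C(Icc (0:ℝ) 1, ℝ)) := hF
  rw [Metric.mem_closure_iff] at hcl
  obtain ⟨gpf, hgp, hdist⟩ := hcl ε hε
  rw [polynomialFunctions_coe] at hgp
  obtain ⟨p, rfl⟩ := hgp
  refine ⟨p, fun s => ?_⟩
  have h1 : dist (F s) ((Polynomial.toContinuousMapOnAlgHom (Icc (0:ℝ) 1) p) s)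
      ≤ dist F (Polynomial.toContinuousMapOnAlgHom (Icc (0:ℝ) 1) p) :=
    ContinuousMap.dist_apply_le_dist s
  rw [Real.dist_eq] at h1
  have h2 : (Polynomial.toContinuousMapOnAlgHom (Icc (0:ℝ) 1) p) s = p.eval (s:ℝ) := rfl
  rw [h2] at h1
  exact h1.trans hdist.le

/-! ### PP for the clamp composites -/

lemma PP_chi (hα0 : 0 < α) (hα2 : α < 2) (hK : 0 ≤ K)
    (hGall : ∀ a : ℝ, 0 < a → PP ν α K (G a))
    (hc1 : 0 < c1) (hcc : c1 < c2) :
    PP ν α K (fun v => chi c1 c2 (G 1 v)) := by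
  have hFcont : Continuous (fun s : ℝ => chi c1 c2 s * (max s c1)⁻¹) := by
    apply chi_cont.mul
    apply Continuous.inv₀ (continuous_id.max continuous_const)
    intro s
    exact (lt_of_lt_of_le hc1 (le_max_right s c1)).ne'
  apply PP_approx (f := fun v => chi c1 c2 (G 1 v)) hα0 hα2 hK (hGall 1 one_pos)
    (by exact chi_cont.measurable.comp (G_measurable 1)) (C := (c2 - c1)⁻¹)
    (by rw [inv_nonneg]; linarith)
  · intro v
    rw [abs_of_nonneg (chi_nonneg _)]
    exact chi_le_scaled hc1.le hcc (G_nonneg one_pos v)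
  · intro ε hε
    set F : C(Icc (0:ℝ) 1, ℝ) :=
      ⟨fun x => chi c1 c2 (x:ℝ) * (max (x:ℝ) c1)⁻¹, hFcont.comp continuous_subtype_val⟩ with hFdef
    obtain ⟨p, hp⟩ := exists_poly F hε
    refine ⟨fun v => G 1 v * p.eval (G 1 v), PP_gpoly hα0 hα2 hK hGall p, fun v => ?_⟩
    have hs0 : 0 ≤ G 1 v := G_nonneg one_pos v
    have hs1 : G 1 v ≤ 1 := G_le_one one_pos v
    have hmem : G 1 v ∈ Icc (0:ℝ) 1 := ⟨hs0, hs1⟩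
    have hfac := chi_factor hc1 hcc hs0
    rw [hfac]
    have : G 1 v * (chi c1 c2 (G 1 v) * (max (G 1 v) c1)⁻¹) - G 1 v * p.eval (G 1 v)
        = G 1 v * (F ⟨G 1 v, hmem⟩ - p.eval (G 1 v)) := by
      rw [hFdef]
      simp only [ContinuousMap.coe_mk]
      ring
    rw [this, abs_mul, abs_of_nonneg hs0, mul_comm (ε)]
    exact mul_le_mul_of_nonneg_left (hp ⟨G 1 v, hmem⟩) hs0







lemma G_one_pos {v : ℝ} (hv : 0 < v) : 0 < G 1 v := by
  unfold G; positivity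

lemma G_one_one : G 1 1 = 1/2 := by norm_num [G]

lemma G_one_lt_one (v : ℝ) : G 1 v < 1 := by
  unfold G
  rw [div_lt_one (by positivity)]
  linarith [sq_nonneg v]

-- indicator on Ioi b as a real function
noncomputable def ind (b : ℝ) : ℝ → ℝ := (Ioi b).indicator (fun _ => (1:ℝ))

lemma ind_nonneg (b v : ℝ) : 0 ≤ ind b v := by
  unfold ind
  exact indicator_nonneg (fun _ _ => zero_le_one) v

lemma ind_le_one (b v : ℝ) : ind b v ≤ 1 := by
  unfold ind
  exact indicator_le_self' (fun _ _ => zero_le_one) v |>.trans (by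
    by_cases h : v ∈ Ioi b <;> simp [indicator_apply, h])

lemma ind_of_mem {b v : ℝ} (h : b < v) : ind b v = 1 := by
  unfold ind; rw [indicator_of_mem (mem_Ioi.mpr h)]

lemma ind_of_not_mem {b v : ℝ} (h : v ≤ b) : ind b v = 0 := by
  unfold ind; rw [indicator_of_notMem (by simpa using h)]

lemma ind_measurable (b : ℝ) : Measurable (ind b) :=
  measurable_const.indicator measurableSet_Ioi

lemma ind_dom {b : ℝ} (hb : 1 ≤ b) (v : ℝ) : |ind b v| ≤ 2 * G 1 v := by
  rcases le_or_gt v b with h | h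
  · rw [ind_of_not_mem h, abs_zero]
    have := G_nonneg one_pos v
    linarith
  · rw [ind_of_mem h, abs_one]
    have : 1/2 < G 1 v := G_half_lt (lt_of_le_of_lt hb h)
    linarith

lemma ind_weight_int (hα0 : 0 < α) {b : ℝ} (hb : 0 < b) :
    IntegrableOn (fun v => ind b v * v ^ (-α-1)) (Ioi 0) := by
  have h1 : IntegrableOn (fun v : ℝ => v ^ (-α-1)) (Ioi b) :=
    integrableOn_Ioi_rpow_of_lt (by linarith) hb
  have h2 : Integrable ((Ioi b).indicator (fun v : ℝ => v ^ (-α-1))) :=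
    h1.integrable_indicator measurableSet_Ioi
  apply (h2.integrableOn (s := Ioi 0)).congr_fun _ measurableSet_Ioi
  intro v _
  unfold ind
  by_cases h : v ∈ Ioi b <;> simp [indicator_apply, h]

lemma LL_ind (hα0 : 0 < α) {b : ℝ} (hb : 0 < b) :
    LL α K (ind b) = K * (b ^ (-α) / α) := by
  unfold LL
  congr 1
  have h1 : ∀ v ∈ Ioi (0:ℝ), ind b v * v ^ (-α-1)
      = (Ioi b).indicator (fun v : ℝ => v ^ (-α-1)) v := by
    intro v _
    unfold ind
    by_cases h : v ∈ Ioi b <;> simp [indicator_apply, h]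
  rw [setIntegral_congr_fun measurableSet_Ioi h1]
  rw [setIntegral_indicator measurableSet_Ioi]
  rw [show Ioi (0:ℝ) ∩ Ioi b = Ioi b by
    rw [Ioi_inter_Ioi, max_eq_right hb.le]]
  exact weight_tail hα0 hb

set_option maxHeartbeats 1000000 in
theorem core (hν : ∀ᵐ u ∂ν, 0 ≤ u) (hα0 : 0 < α) (hα2 : α < 2) (hK : 0 < K)
    (hGall : ∀ a : ℝ, 0 < a → PP ν α K (G a)) :
    Tendsto (fun t : ℝ => t ^ α * (ν (Ioi t)).toReal) atTop (𝓝 (K / α)) := by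
  rw [Metric.tendsto_nhds]
  intro ε hε
  have hKα : 0 < K / α := div_pos hK hα0
  set ε0 : ℝ := ε / (4 * (K/α + 1)) with hε0def
  have hε0pos : 0 < ε0 := by positivity
  have hε0key : K/α * ε0 < ε / 4 := by
    rw [show K/α * ε0 = (K/α * ε) / (4*(K/α+1)) by rw [hε0def]; ring,
      div_lt_div_iff₀ (by positivity) (by norm_num : (0:ℝ) < 4)]
    nlinarith [hKα, hε]
  -- choose b1 < 1 < b2
  have hrpow_cont : Tendsto (fun x : ℝ => x ^ (-α)) (𝓝 1) (𝓝 1) := by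
    have h := (Real.continuousAt_rpow_const 1 (-α) (Or.inl one_ne_zero))
    have h2 : (1:ℝ) ^ (-α) = 1 := Real.one_rpow _
    simpa [ContinuousAt, h2] using h
  have hev : ∀ᶠ x : ℝ in 𝓝 1, |x ^ (-α) - 1| < ε0 := by
    have := hrpow_cont.eventually (Metric.ball_mem_nhds (1:ℝ) hε0pos)
    filter_upwards [this] with x hx
    rw [Real.dist_eq] at hx
    exact hx
  obtain ⟨b1, hb1a, hb1b⟩ : ∃ b1 : ℝ, (|b1 ^ (-α) - 1| < ε0 ∧ 0 < b1) ∧ b1 < 1 := by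
    have h1 : ∀ᶠ x : ℝ in 𝓝[<] 1, |x ^ (-α) - 1| < ε0 ∧ 0 < x :=
      (hev.and (eventually_gt_nhds one_pos)).filter_mono nhdsWithin_le_nhds
    exact (h1.and eventually_mem_nhdsWithin).exists
  obtain ⟨b2, hb2a, hb2b⟩ : ∃ b2 : ℝ, (|b2 ^ (-α) - 1| < ε0) ∧ 1 < b2 := by
    have h1 : ∀ᶠ x : ℝ in 𝓝[>] 1, |x ^ (-α) - 1| < ε0 :=
      hev.filter_mono nhdsWithin_le_nhds
    exact (h1.and eventually_mem_nhdsWithin).exists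
  have hb1pos : 0 < b1 := hb1a.2
  have hb1lt : b1 < 1 := hb1b
  have hb2gt : 1 < b2 := hb2b
  -- clamp functions
  set m1 : ℝ := G 1 b1 with hm1
  set m2 : ℝ := G 1 b2 with hm2
  have hm1pos : 0 < m1 := G_one_pos hb1pos
  have hm1half : m1 < 1/2 := G_one_lt_half hb1pos.le hb1lt
  have hm2half : 1/2 < m2 := G_half_lt hb2gt
  have hm2lt : m2 < 1 := G_one_lt_one b2
  set f2 : ℝ → ℝ := fun v => chi m1 (1/2) (G 1 v) with hf2
  set f1 : ℝ → ℝ := fun v => chi (1/2) m2 (G 1 v) with hf1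
  have hPP2 : PP ν α K f2 := PP_chi hα0 hα2 hK.le hGall hm1pos hm1half
  have hPP1 : PP ν α K f1 := PP_chi hα0 hα2 hK.le hGall (by norm_num) hm2half
  -- pointwise inequalities
  have low1 : ∀ v : ℝ, ind b2 v ≤ f1 v := by
    intro v
    rcases le_or_gt v b2 with h | h
    · rw [ind_of_not_mem h]; exact chi_nonneg _
    · rw [ind_of_mem h]
      have hv0 : (0:ℝ) ≤ b2 := by linarith
      have : m2 ≤ G 1 v := G_one_mono hv0 h.le
      exact (chi_eq_one hm2half this).ge
  have up1 : ∀ v : ℝ, 0 ≤ v → f1 v ≤ ind 1 v := by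
    intro v hv
    rcases le_or_gt v 1 with h | h
    · rw [ind_of_not_mem h]
      have : G 1 v ≤ 1/2 := by
        calc G 1 v ≤ G 1 1 := G_one_mono hv h
        _ = 1/2 := G_one_one
      exact (chi_eq_zero hm2half this).le
    · rw [ind_of_mem h]; exact chi_le_one _
  have low2 : ∀ v : ℝ, ind 1 v ≤ f2 v := by
    intro v
    rcases le_or_gt v 1 with h | h
    · rw [ind_of_not_mem h]; exact chi_nonneg _
    · rw [ind_of_mem h]
      have : 1/2 ≤ G 1 v := (G_half_lt h).le
      exact (chi_eq_one hm1half this).ge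
  have up2 : ∀ v : ℝ, 0 ≤ v → f2 v ≤ ind b1 v := by
    intro v hv
    rcases le_or_gt v b1 with h | h
    · rw [ind_of_not_mem h]
      have : G 1 v ≤ m1 := G_one_mono hv h
      exact (chi_eq_zero hm1half this).le
    · rw [ind_of_mem h]; exact chi_le_one _
  -- LL bounds
  have hiI1 : IntegrableOn (fun v => ind 1 v * v ^ (-α-1)) (Ioi 0) := ind_weight_int hα0 one_pos
  have hiIb1 : IntegrableOn (fun v => ind b1 v * v ^ (-α-1)) (Ioi 0) := ind_weight_int hα0 hb1pos
  have hiIb2 : IntegrableOn (fun v => ind b2 v * v ^ (-α-1)) (Ioi 0) :=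
    ind_weight_int hα0 (by linarith)
  have hLL1low : K * (b2 ^ (-α) / α) ≤ LL α K f1 := by
    rw [← LL_ind hα0 (by linarith : (0:ℝ) < b2)]
    exact LL_mono hK.le hiIb2 hPP1.2.2.1 (fun v _ => low1 v)
  have hLL1up : LL α K f1 ≤ K / α := by
    have : LL α K f1 ≤ LL α K (ind 1) :=
      LL_mono hK.le hPP1.2.2.1 hiI1 (fun v hv => up1 v hv.le)
    rw [LL_ind hα0 one_pos] at this
    simpa [Real.one_rpow, div_eq_mul_inv] using this
  have hLL2low : K / α ≤ LL α K f2 := by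
    have : LL α K (ind 1) ≤ LL α K f2 :=
      LL_mono hK.le hiI1 hPP2.2.2.1 (fun v _ => low2 v)
    rw [LL_ind hα0 one_pos] at this
    simpa [Real.one_rpow, div_eq_mul_inv] using this
  have hLL2up : LL α K f2 ≤ K * (b1 ^ (-α) / α) := by
    rw [← LL_ind hα0 hb1pos]
    exact LL_mono hK.le hPP2.2.2.1 hiIb1 (fun v hv => up2 v hv.le)
  -- numeric bounds
  have hnum2 : K / α - ε/4 < K * (b2 ^ (-α) / α) := by
    have heq : K * (b2 ^ (-α) / α) - K/α = (K/α) * (b2 ^ (-α) - 1) := by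
      field_simp
    have habs : (K/α) * |b2 ^ (-α) - 1| < ε/4 :=
      lt_of_lt_of_le (mul_lt_mul_of_pos_left hb2a hKα) hε0key.le
    have h2 : |(K/α) * (b2 ^ (-α) - 1)| < ε/4 := by
      rw [abs_mul, abs_of_pos hKα]; exact habs
    rw [abs_lt] at h2
    linarith [heq ▸ h2.1]
  have hnum1 : K * (b1 ^ (-α) / α) < K / α + ε/4 := by
    have heq : K * (b1 ^ (-α) / α) - K/α = (K/α) * (b1 ^ (-α) - 1) := by
      field_simp
    have habs : (K/α) * |b1 ^ (-α) - 1| < ε/4 :=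
      lt_of_lt_of_le (mul_lt_mul_of_pos_left hb1a.1 hKα) hε0key.le
    have h2 : |(K/α) * (b1 ^ (-α) - 1)| < ε/4 := by
      rw [abs_mul, abs_of_pos hKα]; exact habs
    rw [abs_lt] at h2
    linarith [heq ▸ h2.2]
  -- eventual estimates
  obtain ⟨C1, hC10, hC1⟩ := hPP1.2.1
  obtain ⟨C2, hC20, hC2⟩ := hPP2.2.1
  have hT1 := hPP1.2.2.2.eventually (Metric.ball_mem_nhds (LL α K f1) (by positivity : (0:ℝ) < ε/4))
  have hT2 := hPP2.2.2.2.eventually (Metric.ball_mem_nhds (LL α K f2) (by positivity : (0:ℝ) < ε/4))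
  filter_upwards [hT1, hT2, eventually_ge_atTop (1:ℝ)] with t h1 h2 ht1
  have ht0 : (0:ℝ) < t := lt_of_lt_of_le one_pos ht1
  have htα : (0:ℝ) ≤ t ^ α := Real.rpow_nonneg ht0.le _
  rw [Real.dist_eq] at h1 h2
  -- the middle integral equals the tail measure
  have hkey : ∫ u, ind 1 (u/t) ∂ν = (ν (Ioi t)).toReal := by
    have hfun : (fun u : ℝ => ind 1 (u/t)) = (Ioi t).indicator (fun _ => (1:ℝ)) := by
      funext u
      rcases le_or_gt u t with h | h
      · rw [ind_of_not_mem (by rw [div_le_one ht0]; exact h),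
          indicator_of_notMem (by simpa using h)]
      · rw [ind_of_mem (by rw [lt_div_iff₀ ht0, one_mul]; exact h),
          indicator_of_mem (mem_Ioi.mpr h)]
    rw [hfun]
    exact integral_indicator_one measurableSet_Ioi
  -- integrability
  have int1 : Integrable (fun u => f1 (u/t)) ν := int_comp hPP1.1 hC10 hC1 t
  have int2 : Integrable (fun u => f2 (u/t)) ν := int_comp hPP2.1 hC20 hC2 t
  have intI : Integrable (fun u => ind 1 (u/t)) ν :=
    int_comp (ind_measurable 1) (by norm_num) (ind_dom le_rfl) t
  have hA : ∫ u, f1 (u/t) ∂ν ≤ (ν (Ioi t)).toReal := by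
    rw [← hkey]
    apply integral_mono_ae int1 intI
    filter_upwards [hν] with u hu
    exact up1 (u/t) (div_nonneg hu ht0.le)
  have hB : (ν (Ioi t)).toReal ≤ ∫ u, f2 (u/t) ∂ν := by
    rw [← hkey]
    apply integral_mono_ae intI int2
    filter_upwards [hν] with u _
    exact low2 (u/t)
  have hA' : t ^ α * ∫ u, f1 (u/t) ∂ν ≤ t ^ α * (ν (Ioi t)).toReal :=
    mul_le_mul_of_nonneg_left hA htα
  have hB' : t ^ α * (ν (Ioi t)).toReal ≤ t ^ α * ∫ u, f2 (u/t) ∂ν :=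
    mul_le_mul_of_nonneg_left hB htα
  rw [Real.dist_eq, abs_lt]
  rw [abs_lt] at h1 h2
  constructor
  · linarith [h1.1, hA', hLL1low, hnum2]
  · linarith [h2.2, hB', hLL2up, hnum1]


end Stmt10Aux

open Stmt10Aux


/-- **Tauberian-type implication.** Let `μ` be a symmetric probability measure
on `ℝ`, `0 < α < 2`, `c > 0`. If `Im m_μ(it) − t^{-1} ∼ −Δ(α) c t^{-α-1}` as `t → +∞`, where
`Δ(α) = 2α ∫_0^∞ x^{1-α}/(1+x²) dx` and `Im m_μ(it) = ∫ t/(t²+x²) μ(dx)`, then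
`μ((t,∞)) ∼ c t^{-α}` as `t → +∞`. -/
theorem stmt10 (μ : Measure ℝ) [IsProbabilityMeasure μ]
    (hsymm : Measure.map (fun x => -x) μ = μ)
    (α : ℝ) (hα0 : 0 < α) (hα2 : α < 2) (c : ℝ) (hc : 0 < c)
    (hyp : Tendsto
      (fun t : ℝ => ((∫ x, t / (t ^ 2 + x ^ 2) ∂μ) - t⁻¹) /
        (-((2 * α * ∫ x in Set.Ioi (0:ℝ), x ^ (1 - α) / (1 + x ^ 2)) * c * t ^ (-α - 1))))
      atTop (nhds 1)) :
    Tendsto (fun t : ℝ => (μ (Set.Ioi t)).toReal / (c * t ^ (-α))) atTop (nhds 1) := by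
  set I₀ : ℝ := ∫ x in Set.Ioi (0:ℝ), x ^ (1 - α) / (1 + x ^ 2) with hI₀
  have hI0pos : 0 < I₀ := weight_pos hα0 hα2
  set D : ℝ := 2 * α * I₀ * c with hD
  have hDpos : 0 < D := by positivity
  -- the measure ν
  set ν : Measure ℝ := Measure.map (fun x : ℝ => |x|) μ with hν
  have hνprob : IsProbabilityMeasure ν := Measure.isProbabilityMeasure_map measurable_abs.aemeasurable
  have hνae : ∀ᵐ u ∂ν, 0 ≤ u := by
    rw [hν, MeasureTheory.ae_map_iff measurable_abs.aemeasurable measurableSet_Ici]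
    exact ae_of_all _ fun x => abs_nonneg x
  -- S₀
  set S₀ : ℝ → ℝ := fun r => ∫ x, x ^ 2 / (r ^ 2 + x ^ 2) ∂μ with hS₀
  have hSint : ∀ r : ℝ, r ≠ 0 → Integrable (fun x : ℝ => x ^ 2 / (r ^ 2 + x ^ 2)) μ := by
    intro r hr
    apply Integrable.mono' (integrable_const (1:ℝ))
      ((measurable_id.pow_const 2).div (measurable_const.add (measurable_id.pow_const 2))).aestronglyMeasurable
    filter_upwards with x
    have hr2 : 0 < r ^ 2 := by positivity
    show ‖x ^ 2 / (r ^ 2 + x ^ 2)‖ ≤ 1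
    rw [Real.norm_eq_abs, abs_of_nonneg (by positivity)]
    rw [div_le_one (by positivity)]
    linarith
  -- step 1 : hyp → tendsto of t^α * S₀ t
  have hS : Tendsto (fun t : ℝ => t ^ α * S₀ t) atTop (𝓝 D) := by
    have hfun : ∀ᶠ t : ℝ in atTop,
        D * (((∫ x, t / (t ^ 2 + x ^ 2) ∂μ) - t⁻¹) /
          (-((2 * α * I₀) * c * t ^ (-α - 1)))) = t ^ α * S₀ t := by
      filter_upwards [eventually_gt_atTop (0:ℝ)] with t ht0
      have ht : t ≠ 0 := ht0.ne'
      have ht2 : (0:ℝ) < t ^ 2 := by positivity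
      -- numerator identity
      have hnum : (∫ x, t / (t ^ 2 + x ^ 2) ∂μ) - t⁻¹ = -(t⁻¹ * S₀ t) := by
        have hpt : ∀ x : ℝ, t / (t ^ 2 + x ^ 2) = t⁻¹ * (1 - x ^ 2 / (t ^ 2 + x ^ 2)) := by
          intro x
          have : (0:ℝ) < t ^ 2 + x ^ 2 := by positivity
          field_simp
          ring
        have h1 : (∫ x, t / (t ^ 2 + x ^ 2) ∂μ)
            = t⁻¹ * (1 - S₀ t) := by
          rw [show (fun x : ℝ => t / (t ^ 2 + x ^ 2))
              = fun x : ℝ => t⁻¹ * (1 - x ^ 2 / (t ^ 2 + x ^ 2)) from funext hpt]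
          rw [integral_const_mul]
          congr 1
          rw [integral_sub (integrable_const 1) (hSint t ht)]
          simp [hS₀]
        rw [h1]
        ring
      rw [hnum]
      have hrpow : t ^ (-α - 1) = (t ^ α)⁻¹ * t⁻¹ := by
        rw [show -α - 1 = -(α + 1) by ring, Real.rpow_neg ht0.le, Real.rpow_add ht0,
          Real.rpow_one, mul_inv]
      have htα : (0:ℝ) < t ^ α := Real.rpow_pos_of_pos ht0 _
      rw [hrpow]
      field_simp
      ring
    have hD' : Tendsto (fun t : ℝ =>
        D * (((∫ x, t / (t ^ 2 + x ^ 2) ∂μ) - t⁻¹) /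
          (-((2 * α * I₀) * c * t ^ (-α - 1))))) atTop (𝓝 (D * 1)) :=
      hyp.const_mul D
    rw [mul_one] at hD'
    exact hD'.congr' hfun
  -- step 2 : PP for all G a
  have hGall : ∀ a : ℝ, 0 < a → PP ν α (2 * c * α) (G a) := by
    intro a ha
    have hsq : 0 < Real.sqrt a := Real.sqrt_pos.mpr ha
    have hs2 : Real.sqrt a ^ 2 = a := Real.sq_sqrt ha.le
    have hsαpos : (0:ℝ) < Real.sqrt a ^ (-α) := Real.rpow_pos_of_pos hsq _
    have hwint : IntegrableOn (fun v => G a v * v ^ (-α-1)) (Ioi 0) := by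
      apply (weight_int hα0 hα2 ha).congr_fun _ measurableSet_Ioi
      intro v hv
      exact (G_weight_eq hv a).symm
    have hLLval : LL α (2 * c * α) (G a) = Real.sqrt a ^ (-α) * D := by
      unfold LL
      rw [setIntegral_congr_fun measurableSet_Ioi (fun v hv => G_weight_eq hv a)]
      rw [weight_scale hα0 hα2 ha, ← hI₀, hD]
      ring
    refine ⟨G_measurable a, ⟨max 1 a⁻¹, le_max_of_le_left zero_le_one, G_dom ha⟩, hwint, ?_⟩
    -- identify the integral with S₀ (√a * t)
    have hfun : ∀ᶠ t : ℝ in atTop, t ^ α * ∫ u, G a (u/t) ∂ν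
        = Real.sqrt a ^ (-α) * ((Real.sqrt a * t) ^ α * S₀ (Real.sqrt a * t)) := by
      filter_upwards [eventually_gt_atTop (0:ℝ)] with t ht0
      have hg : AEStronglyMeasurable (fun u : ℝ => G a (u / t))
          (Measure.map (fun x : ℝ => |x|) μ) :=
        ((G_measurable a).comp (measurable_id.div_const t)).aestronglyMeasurable
      have hteq : ∫ u, G a (u/t) ∂ν = S₀ (Real.sqrt a * t) := by
        rw [hν, integral_map measurable_abs.aemeasurable hg]
        apply integral_congr_ae
        filter_upwards with x
        unfold G
        rw [div_pow, sq_abs, mul_pow, hs2]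
        rw [div_eq_div_iff (by positivity : (0:ℝ) < a + x^2/t^2).ne'
          (by positivity : (0:ℝ) < a*t^2 + x^2).ne']
        field_simp
        try ring
      rw [hteq]
      have hmul : (Real.sqrt a * t) ^ α = Real.sqrt a ^ α * t ^ α :=
        Real.mul_rpow hsq.le ht0.le
      have hcancel : Real.sqrt a ^ (-α) * Real.sqrt a ^ α = 1 := by
        rw [← Real.rpow_add hsq]
        simp
      rw [hmul]
      calc t ^ α * S₀ (Real.sqrt a * t)
          = (Real.sqrt a ^ (-α) * Real.sqrt a ^ α) * (t ^ α * S₀ (Real.sqrt a * t)) := by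
            rw [hcancel]; ring
      _ = Real.sqrt a ^ (-α) * (Real.sqrt a ^ α * t ^ α * S₀ (Real.sqrt a * t)) := by ring
    have hcomp : Tendsto (fun t : ℝ => (Real.sqrt a * t) ^ α * S₀ (Real.sqrt a * t))
        atTop (𝓝 D) :=
      hS.comp (Tendsto.const_mul_atTop hsq tendsto_id)
    have := (hcomp.const_mul (Real.sqrt a ^ (-α))).congr' (hfun.mono fun t ht => ht.symm)
    rw [hLLval]
    exact this
  -- step 3 : apply core
  have hcore := core hνae hα0 hα2 (by positivity : (0:ℝ) < 2 * c * α) hGall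
  have hKα : 2 * c * α / α = 2 * c := by field_simp
  rw [hKα] at hcore
  -- step 4 : ν tails vs μ tails
  have htail : ∀ t : ℝ, 0 < t → (ν (Ioi t)).toReal = 2 * (μ (Ioi t)).toReal := by
    intro t ht
    have hpre : (fun x : ℝ => |x|) ⁻¹' (Ioi t) = Ioi t ∪ Iio (-t) := by
      ext x
      simp only [mem_preimage, mem_Ioi, mem_union, mem_Iio]
      rw [lt_abs]
      constructor
      · rintro (h | h)
        · exact Or.inl h
        · exact Or.inr (by linarith)
      · rintro (h | h)
        · exact Or.inl h
        · exact Or.inr (by linarith)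
    have hneg : μ (Iio (-t)) = μ (Ioi t) := by
      conv_rhs => rw [← hsymm]
      rw [Measure.map_apply measurable_neg measurableSet_Ioi]
      congr 1
      ext x
      simp only [mem_preimage, mem_Ioi, mem_Iio]
      constructor <;> intro h <;> linarith
    have hdisj : Disjoint (Ioi t) (Iio (-t)) := by
      rw [Set.disjoint_left]
      intro x hx hx'
      simp only [mem_Ioi] at hx
      simp only [mem_Iio] at hx'
      linarith
    rw [hν, Measure.map_apply measurable_abs measurableSet_Ioi, hpre,
      measure_union hdisj measurableSet_Iio, hneg]
    rw [ENNReal.toReal_add (measure_ne_top μ _) (measure_ne_top μ _)]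
    ring
  -- step 5 : conclude
  have hfinal : ∀ᶠ t : ℝ in atTop,
      (t ^ α * (ν (Ioi t)).toReal) * (2 * c)⁻¹ = (μ (Set.Ioi t)).toReal / (c * t ^ (-α)) := by
    filter_upwards [eventually_gt_atTop (0:ℝ)] with t ht0
    rw [htail t ht0]
    have htα : (0:ℝ) < t ^ α := Real.rpow_pos_of_pos ht0 _
    rw [Real.rpow_neg ht0.le]
    field_simp
  have := (hcore.mul_const (2 * c)⁻¹).congr' hfinal
  rw [show (2 * c) * (2 * c)⁻¹ = 1 by field_simp] at this
  exact this
end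

section
/- Let T be a densely defined symmetric operator on ℓ²(V) for a countable set V whose skeleton (the graph with an edge between u,v whenever ⟨δ_u , T δ_v⟩ ≠ 0) is a tree, and suppose there exist κ > 0 and an increasing sequence of finite connected subsets S_n ⊆ V exhausting V such that for every n and every v ∈ S_n, Σ_{u ∉ S_n, u ∼ v} |⟨δ_v, T δ_u⟩|² ≤ κ. Then T is essentially self-adjoint. -/
open Filter Set

open SimpleGraph in
private lemma stmt11_unique_nbr {V : Type*} [DecidableEq V] {G : SimpleGraph V}
    (htree : G.IsTree) (s : Finset V) (hconn : (G.induce (↑s : Set V)).Connected)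
    {u v1 v2 : V} (hu : u ∉ s) (h1 : v1 ∈ s) (h2 : v2 ∈ s)
    (ha1 : G.Adj u v1) (ha2 : G.Adj u v2) : v1 = v2 := by
  by_contra hne
  obtain ⟨p⟩ := hconn.preconnected ⟨v1, h1⟩ ⟨v2, h2⟩
  let q : G.Walk v1 v2 := p.map (SimpleGraph.Embedding.induce (↑s : Set V)).toHom
  have hq : ∀ x ∈ q.support, x ∈ s := by
    intro x hx
    replace hx : x ∈ (p.map (SimpleGraph.Embedding.induce (↑s : Set V)).toHom).support := hx
    rw [SimpleGraph.Walk.support_map] at hx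
    obtain ⟨y, _, rfl⟩ := List.mem_map.mp hx
    exact y.2
  have hP2 : (Walk.cons ha1.symm (Walk.cons ha2 Walk.nil) : G.Walk v1 v2).IsPath := by
    simp [Walk.isPath_def, hne, ha1.ne, ha2.ne, Ne.symm ha1.ne]
  obtain ⟨P, -, huniq⟩ := htree.existsUnique_path v1 v2
  have e1 := huniq _ q.toPath.2
  have e2 := huniq _ hP2
  have hu1 : u ∈ (↑q.toPath : G.Walk v1 v2).support := by
    rw [e1, ← e2]; simp
  exact hu (hq u (q.support_toPath_subset hu1))

private lemma stmt11_tsum_split {α : Type*} [AddCommGroup α] [TopologicalSpace α]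
    [IsTopologicalAddGroup α] [T2Space α] {V : Type*} [DecidableEq V] {f : V → α}
    (hf : Summable f) (s : Finset V) :
    ∑' u, f u = (∑ u ∈ s, f u) + ∑' u, (if u ∈ s then 0 else f u) := by
  have hin : HasSum (fun u => if u ∈ s then f u else 0) (∑ u ∈ s, f u) := by
    have h0 : HasSum (fun u => if u ∈ s then f u else 0) (∑ u ∈ s, if u ∈ s then f u else 0) :=
      hasSum_sum_of_ne_finset_zero (s := s) (f := fun u => if u ∈ s then f u else 0)
      (by intro b hb; simp [hb])
    have : (∑ u ∈ s, if u ∈ s then f u else 0) = ∑ u ∈ s, f u :=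
      Finset.sum_congr rfl fun u hu => by simp [hu]
    rwa [this] at h0
  have hout : Summable (fun u => if u ∈ s then 0 else f u) := by
    have := hf.sub hin.summable
    refine this.congr fun u => ?_
    by_cases h : u ∈ s <;> simp [h]
  have htot : HasSum f ((∑ u ∈ s, f u) + ∑' u, (if u ∈ s then 0 else f u)) := by
    have h := hin.add hout.hasSum
    have heq : (fun u => (if u ∈ s then f u else 0) + (if u ∈ s then 0 else f u)) = f := by
      funext u; by_cases h : u ∈ s <;> simp [h]
    rwa [heq] at h
  exact htot.tsum_eq

private lemma stmt11_ite_summable {V : Type*} [DecidableEq V] {f : V → ℝ}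
    (hf : Summable f) (h0 : ∀ u, 0 ≤ f u) (s : Finset V) :
    Summable (fun u => if u ∈ s then 0 else f u) := by
  refine Summable.of_nonneg_of_le (fun u => ?_) (fun u => ?_) hf
  · by_cases h : u ∈ s <;> simp [h, h0 u]
  · by_cases h : u ∈ s <;> simp [h, h0 u]

private lemma stmt11_sq_sum_of_unique {V : Type*} {s : Finset V} {c : V → ℝ}
    (h : ∀ v1 ∈ s, ∀ v2 ∈ s, c v1 ≠ 0 → c v2 ≠ 0 → v1 = v2) :
    (∑ v ∈ s, c v) ^ 2 = ∑ v ∈ s, c v ^ 2 := by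
  rw [sq, Finset.sum_mul_sum]
  refine Finset.sum_congr rfl fun v hv => ?_
  by_cases hc : c v = 0
  · simp [hc]
  · rw [Finset.sum_eq_single v (fun v' hv' hne => ?_) (fun h' => absurd hv h'), sq]
    by_cases hc' : c v' = 0
    · simp [hc']
    · exact absurd (h v hv v' hv' hc hc') (Ne.symm hne)

private lemma stmt11_tsum_cs {V : Type*} {a b : V → ℝ} (ha : Summable (fun u => a u ^ 2))
    (hb : Summable (fun u => b u ^ 2)) (ha0 : ∀ u, 0 ≤ a u) (hb0 : ∀ u, 0 ≤ b u) :
    (∑' u, a u * b u) ^ 2 ≤ (∑' u, a u ^ 2) * (∑' u, b u ^ 2) := by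
  have hab : Summable (fun u => a u * b u) := by
    refine Summable.of_nonneg_of_le (fun u => mul_nonneg (ha0 u) (hb0 u))
      (fun u => ?_) (ha.add hb)
    nlinarith [sq_nonneg (a u - b u)]
  have hA : 0 ≤ ∑' u, a u ^ 2 := tsum_nonneg fun u => sq_nonneg _
  have hB : 0 ≤ ∑' u, b u ^ 2 := tsum_nonneg fun u => sq_nonneg _
  have key : ∑' u, a u * b u ≤ Real.sqrt ((∑' u, a u ^ 2) * (∑' u, b u ^ 2)) := by
    refine Summable.tsum_le_of_sum_le hab fun s => ?_
    have h1 := Finset.sum_mul_sq_le_sq_mul_sq s a b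
    have h2 : (∑ i ∈ s, a i ^ 2) * (∑ i ∈ s, b i ^ 2) ≤ (∑' u, a u ^ 2) * (∑' u, b u ^ 2) :=
      mul_le_mul (Summable.sum_le_tsum s (fun i _ => sq_nonneg _) ha)
        (Summable.sum_le_tsum s (fun i _ => sq_nonneg _) hb)
        (Finset.sum_nonneg fun i _ => sq_nonneg _) hA
    have hs0 : 0 ≤ ∑ i ∈ s, a i * b i := Finset.sum_nonneg fun i _ => mul_nonneg (ha0 i) (hb0 i)
    exact (Real.le_sqrt hs0 (mul_nonneg hA hB)).mpr (le_trans h1 h2)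
  have h0 : 0 ≤ ∑' u, a u * b u := tsum_nonneg fun u => mul_nonneg (ha0 u) (hb0 u)
  calc (∑' u, a u * b u) ^ 2 ≤ Real.sqrt ((∑' u, a u ^ 2) * (∑' u, b u ^ 2)) ^ 2 :=
        pow_le_pow_left₀ h0 key 2
    _ = (∑' u, a u ^ 2) * (∑' u, b u ^ 2) := Real.sq_sqrt (mul_nonneg hA hB)

/-- **criterion of essential self-adjointness on a tree.** Let `T` be a densely
defined symmetric operator on `ℓ²(V)` (`V` countable), given by matrix elements
`w u v = ⟨δ_u, T δ_v⟩` with hermitian symmetry and square-summable rows, whose skeleton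
(the graph with an edge `{u,v}` whenever `w u v ≠ 0`) is a tree `G`. Suppose there exist
`κ > 0` and an increasing sequence of finite connected subsets `S n ⊆ V` exhausting `V` such
that for every `n` and `v ∈ S n`, `Σ_{u ∉ S n} |w v u|² ≤ κ`. Then `T` is essentially
self-adjoint: the deficiency equations `T* φ = ± i φ` have only the solution `φ = 0` in
`ℓ²(V)`. -/
theorem stmt11 {V : Type*} [Countable V] [DecidableEq V]
    (G : SimpleGraph V) (htree : G.IsTree)
    (w : V → V → ℂ)
    (hherm : ∀ u v, w u v = starRingEnd ℂ (w v u))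
    (hskel : ∀ u v, w u v ≠ 0 ↔ G.Adj u v)
    (hrow : ∀ v, Summable (fun u => ‖w v u‖ ^ 2))
    (κ : ℝ) (hκ : 0 < κ)
    (S : ℕ → Finset V)
    (hmono : ∀ n, S n ⊆ S (n + 1))
    (hexh : ∀ v, ∃ n, v ∈ S n)
    (hconn : ∀ n, (G.induce (↑(S n) : Set V)).Connected)
    (hbdry : ∀ n, ∀ v ∈ S n, ∑' u : V, (if u ∈ S n then 0 else ‖w v u‖ ^ 2) ≤ κ) :
    ∀ φ : V → ℂ, Summable (fun v => ‖φ v‖ ^ 2) →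
      ((∀ v, HasSum (fun u => w v u * φ u) (Complex.I * φ v)) → φ = 0) ∧
      ((∀ v, HasSum (fun u => w v u * φ u) (-Complex.I * φ v)) → φ = 0) := by
  intro φ hφ
  suffices core : ∀ c : ℂ, (c.im = 1 ∨ c.im = -1) →
      (∀ v, HasSum (fun u => w v u * φ u) (c * φ v)) → φ = 0 by
    exact ⟨core Complex.I (Or.inl rfl) , core (-Complex.I) (Or.inr (by simp))⟩
  intro c hcim hc
  set T : ℝ := ∑' v, ‖φ v‖ ^ 2 with hTdef
  set M : ℕ → ℝ := fun n => ∑ v ∈ S n, ‖φ v‖ ^ 2 with hMdef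
  set t : ℕ → ℝ := fun n => ∑' u, (if u ∈ S n then 0 else ‖φ u‖ ^ 2) with htdef
  have hT0 : 0 ≤ T := tsum_nonneg fun v => sq_nonneg _
  have main : ∀ n, M n ^ 2 ≤ (κ * T) * t n := by
    intro n
    set g : V → V → ℂ := fun v u => (starRingEnd ℂ) (φ v) * (w v u * φ u) with hgdef
    have hgs : ∀ v, Summable (g v) := fun v => (hc v).summable.mul_left _
    have hgn : ∀ v, Summable (fun u => ‖g v u‖) := fun v => summable_norm_iff.mpr (hgs v)
    have hM0 : 0 ≤ M n := Finset.sum_nonneg fun v _ => sq_nonneg _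
    -- total identity
    have hz : ∀ z : ℂ, (starRingEnd ℂ) z * (c * z) = c * ((‖z‖ ^ 2 : ℝ) : ℂ) := by
      intro z
      rw [mul_left_comm, mul_comm ((starRingEnd ℂ) z) z, Complex.mul_conj,
        show Complex.normSq z = ‖z‖ ^ 2 by rw [Complex.normSq_eq_norm_sq]]
    have htot : ∑ v ∈ S n, ∑' u, g v u = c * ((M n : ℝ) : ℂ) := by
      calc ∑ v ∈ S n, ∑' u, g v u = ∑ v ∈ S n, c * ((‖φ v‖ ^ 2 : ℝ) : ℂ) :=
            Finset.sum_congr rfl fun v _ => by rw [((hc v).mul_left _).tsum_eq, hz]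
        _ = c * ((M n : ℝ) : ℂ) := by simp only [hMdef]; rw [← Finset.mul_sum]; norm_cast
    set R : V → ℂ := fun v => ∑' u, (if u ∈ S n then 0 else g v u) with hRdef
    have hsplit : c * ((M n : ℝ) : ℂ) =
        (∑ v ∈ S n, ∑ u ∈ S n, g v u) + ∑ v ∈ S n, R v := by
      rw [← htot, Finset.sum_congr rfl fun v _ => stmt11_tsum_split (hgs v) (S n),
        Finset.sum_add_distrib]
    have hD : (∑ v ∈ S n, ∑ u ∈ S n, g v u).im = 0 := by
      refine Complex.conj_eq_iff_im.mp ?_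
      simp only [map_sum]
      rw [Finset.sum_comm]
      refine Finset.sum_congr rfl fun x _ => Finset.sum_congr rfl fun y _ => ?_
      simp only [hgdef, map_mul, Complex.conj_conj]
      rw [← hherm]
      ring
    have him : c.im * M n = (∑ v ∈ S n, R v).im := by
      have h := congrArg Complex.im hsplit
      simpa [Complex.add_im, hD, Complex.mul_im] using h
    have h1 : M n ≤ ∑ v ∈ S n, ‖R v‖ := by
      have habs : |c.im * M n| = M n := by
        rcases hcim with h | h <;> rw [h] <;> simp [abs_of_nonneg hM0]
      calc M n = |(∑ v ∈ S n, R v).im| := by rw [← him, habs]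
        _ ≤ ‖∑ v ∈ S n, R v‖ := by
            exact Complex.abs_im_le_norm _
        _ ≤ ∑ v ∈ S n, ‖R v‖ := norm_sum_le _ _
    have hgnite : ∀ v, Summable (fun u => if u ∈ S n then 0 else ‖g v u‖) :=
      fun v => stmt11_ite_summable (hgn v) (fun u => norm_nonneg _) (S n)
    have h2 : ∀ v, ‖R v‖ ≤ ∑' u, (if u ∈ S n then 0 else ‖g v u‖) := by
      intro v
      have hs : Summable (fun u => ‖if u ∈ S n then 0 else g v u‖) := by
        refine (hgnite v).congr fun u => ?_
        by_cases h : u ∈ S n <;> simp [h]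
      calc ‖R v‖ ≤ ∑' u, ‖if u ∈ S n then 0 else g v u‖ := norm_tsum_le_tsum_norm hs
        _ = ∑' u, (if u ∈ S n then 0 else ‖g v u‖) :=
            tsum_congr fun u => by by_cases h : u ∈ S n <;> simp [h]
    set a : V → ℝ := fun u => if u ∈ S n then 0 else ∑ v ∈ S n, ‖φ v‖ * ‖w v u‖ with hadef
    set b : V → ℝ := fun u => if u ∈ S n then 0 else ‖φ u‖ with hbdef
    have ha0 : ∀ u, 0 ≤ a u := by
      intro u
      by_cases h : u ∈ S n
      · simp [hadef, h]
      · simp only [hadef, if_neg h]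
        exact Finset.sum_nonneg fun v _ => mul_nonneg (norm_nonneg _) (norm_nonneg _)
    have hb0 : ∀ u, 0 ≤ b u := by
      intro u; by_cases h : u ∈ S n <;> simp [hbdef, h, norm_nonneg]
    have hab : ∀ u, (∑ v ∈ S n, if u ∈ S n then 0 else ‖g v u‖) = a u * b u := by
      intro u
      by_cases h : u ∈ S n
      · simp [hadef, hbdef, h]
      · simp only [hadef, hbdef, if_neg h]
        rw [Finset.sum_mul]
        exact Finset.sum_congr rfl fun v _ => by simp [hgdef, norm_mul, mul_assoc]
    have h3 : M n ≤ ∑' u, a u * b u := by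
      calc M n ≤ ∑ v ∈ S n, ‖R v‖ := h1
        _ ≤ ∑ v ∈ S n, ∑' u, (if u ∈ S n then 0 else ‖g v u‖) :=
            Finset.sum_le_sum fun v _ => h2 v
        _ = ∑' u, ∑ v ∈ S n, (if u ∈ S n then 0 else ‖g v u‖) :=
            (Summable.tsum_finsetSum fun v _ => hgnite v).symm
        _ = ∑' u, a u * b u := tsum_congr hab
    -- bound tsum a²
    have hasq : ∀ u, a u ^ 2 = ∑ v ∈ S n, (if u ∈ S n then 0 else ‖φ v‖ ^ 2 * ‖w v u‖ ^ 2) := by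
      intro u
      by_cases h : u ∈ S n
      · simp [hadef, h]
      · simp only [hadef, if_neg h]
        rw [stmt11_sq_sum_of_unique ?_]
        · exact Finset.sum_congr rfl fun v _ => by rw [mul_pow]
        · intro v1 hv1 v2 hv2 hz1 hz2
          have hw1 : w v1 u ≠ 0 := fun hh => hz1 (by simp [hh])
          have hw2 : w v2 u ≠ 0 := fun hh => hz2 (by simp [hh])
          exact stmt11_unique_nbr htree (S n) (hconn n) (by simpa using h) hv1 hv2
            ((hskel v1 u).mp hw1).symm ((hskel v2 u).mp hw2).symm
    have hhv : ∀ v, Summable (fun u => if u ∈ S n then 0 else ‖φ v‖ ^ 2 * ‖w v u‖ ^ 2) := by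
      intro v
      exact stmt11_ite_summable ((hrow v).mul_left _)
        (fun u => mul_nonneg (sq_nonneg _) (sq_nonneg _)) (S n)
    have hasum : Summable (fun u => a u ^ 2) := by
      refine (summable_sum (s := S n) fun v _ => hhv v).congr fun u => (hasq u).symm
    have hbsum : Summable (fun u => b u ^ 2) := by
      refine (stmt11_ite_summable hφ (fun u => sq_nonneg _) (S n)).congr fun u => ?_
      by_cases h : u ∈ S n <;> simp [hbdef, h]
    have hbt : ∑' u, b u ^ 2 = t n := by
      refine tsum_congr fun u => ?_
      by_cases h : u ∈ S n <;> simp [hbdef, htdef, h]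
    have haK : ∑' u, a u ^ 2 ≤ κ * T := by
      calc ∑' u, a u ^ 2
          = ∑ v ∈ S n, ∑' u, (if u ∈ S n then 0 else ‖φ v‖ ^ 2 * ‖w v u‖ ^ 2) := by
            rw [tsum_congr hasq, Summable.tsum_finsetSum fun v _ => hhv v]
        _ ≤ ∑ v ∈ S n, ‖φ v‖ ^ 2 * κ := by
            refine Finset.sum_le_sum fun v hv => ?_
            have : ∑' u, (if u ∈ S n then 0 else ‖φ v‖ ^ 2 * ‖w v u‖ ^ 2)
                = ‖φ v‖ ^ 2 * ∑' u, (if u ∈ S n then 0 else ‖w v u‖ ^ 2) := by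
              rw [← tsum_mul_left]
              exact tsum_congr fun u => by by_cases h : u ∈ S n <;> simp [h]
            rw [this]
            exact mul_le_mul_of_nonneg_left (hbdry n v hv) (sq_nonneg _)
        _ = M n * κ := by rw [← Finset.sum_mul]
        _ ≤ T * κ := by
            refine mul_le_mul_of_nonneg_right ?_ hκ.le
            exact Summable.sum_le_tsum (S n) (fun v _ => sq_nonneg _) hφ
        _ = κ * T := mul_comm _ _
    have ht0 : 0 ≤ t n := tsum_nonneg fun u => by by_cases h : u ∈ S n <;> simp [h, sq_nonneg]
    calc M n ^ 2 ≤ (∑' u, a u * b u) ^ 2 := pow_le_pow_left₀ hM0 h3 2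
      _ ≤ (∑' u, a u ^ 2) * (∑' u, b u ^ 2) := stmt11_tsum_cs hasum hbsum ha0 hb0
      _ ≤ (κ * T) * t n := by
          rw [hbt]
          exact mul_le_mul_of_nonneg_right haK ht0
  -- limits
  have hSmono : Monotone S := monotone_nat_of_le_succ hmono
  have htendS : Tendsto S atTop atTop := Filter.tendsto_atTop_finset_of_monotone hSmono hexh
  have hMT : Tendsto M atTop (nhds T) := hφ.hasSum.comp htendS
  have htT : Tendsto t atTop (nhds 0) := by
    have heq : t = fun n => T - M n := by
      funext n
      have := stmt11_tsum_split hφ (S n)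
      rw [htdef, hMdef]
      rw [hTdef]
      linarith [this]
    rw [heq]
    simpa using hMT.const_sub T
  have hT2 : T ^ 2 ≤ (κ * T) * 0 :=
    le_of_tendsto_of_tendsto' (hMT.pow 2) (tendsto_const_nhds.mul htT) main
  have hTz : T = 0 := by nlinarith [sq_nonneg T]
  funext v
  have hv : ‖φ v‖ ^ 2 ≤ T := Summable.le_tsum hφ v fun j _ => sq_nonneg _
  have : ‖φ v‖ ^ 2 = 0 := le_antisymm (hTz ▸ hv) (sq_nonneg _)
  have h0 : ‖φ v‖ = 0 := (pow_eq_zero_iff two_ne_zero).mp this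
  simpa using norm_eq_zero.mp h0
end

section
/- Key inequality in the self-adjointness criterion: under the hypotheses of the previous criterion, any φ ∈ D(T*) with T*φ = iφ satisfies Σ_{v ∈ S_n} |φ(v)|² ≤ κ Σ_{v ∉ S_n} |φ(v)|² for every n, and hence φ = 0. -/
open Filter Set

open Topology

-- Tree fact: a vertex outside a connected induced set has at most one neighbor inside it.
lemma tree_unique_nbr {V : Type*} [DecidableEq V] (G : SimpleGraph V) (htree : G.IsTree) (s : Set V)
    (hconn : (G.induce s).Connected) {u v1 v2 : V} (hu : u ∉ s) (h1 : v1 ∈ s) (h2 : v2 ∈ s)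
    (ha1 : G.Adj v1 u) (ha2 : G.Adj v2 u) : v1 = v2 := by
  by_contra hne
  obtain ⟨p⟩ := hconn.preconnected ⟨v1, h1⟩ ⟨v2, h2⟩
  set q : G.Walk v1 v2 := p.map (SimpleGraph.Embedding.induce s).toHom with hq
  have hsupp : ∀ x ∈ q.toPath.1.support, x ∈ s := by
    intro x hx
    have hx' := q.support_bypass_subset hx
    replace hx' : x ∈ p.support.map (SimpleGraph.Embedding.induce (G := G) s).toHom := by
      rw [← SimpleGraph.Walk.support_map]; exact hx'
    obtain ⟨y, _, rfl⟩ := List.mem_map.mp hx'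
    exact y.2
  have hr : (SimpleGraph.Walk.cons ha1 (SimpleGraph.Walk.cons ha2.symm SimpleGraph.Walk.nil)).IsPath := by
    simp only [SimpleGraph.Walk.isPath_def, SimpleGraph.Walk.support_cons,
      SimpleGraph.Walk.support_nil, List.nodup_cons, List.mem_cons]
    refine ⟨?_, ?_, by simp⟩ <;> simp_all <;> intro h <;> subst h <;> simp_all
  have huniq := SimpleGraph.isAcyclic_iff_path_unique.mp htree.IsAcyclic
    (⟨_, hr⟩ : G.Path v1 v2) q.toPath
  have : u ∈ q.toPath.1.support := by
    rw [← huniq]; simp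
  exact hu (hsupp u this)

lemma summable_mul_of_sq {V : Type*} {f g : V → ℝ}
    (h2f : Summable fun v => f v ^ 2) (h2g : Summable fun v => g v ^ 2) :
    Summable fun v => f v * g v := by
  refine Summable.of_abs (Summable.of_nonneg_of_le (fun v => abs_nonneg _)
    (fun v => ?_) (((h2f.add h2g).div_const 2)))
  nlinarith [sq_nonneg (|f v| - |g v|), abs_mul (f v) (g v), sq_abs (f v), sq_abs (g v), abs_nonneg (f v), abs_nonneg (g v)]

lemma tsum_cs {V : Type*} (f g : V → ℝ) (hf : ∀ v, 0 ≤ f v) (hg : ∀ v, 0 ≤ g v)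
    (h2f : Summable fun v => f v ^ 2) (h2g : Summable fun v => g v ^ 2) :
    ∑' v, f v * g v ≤ Real.sqrt (∑' v, f v ^ 2) * Real.sqrt (∑' v, g v ^ 2) := by
  refine Summable.tsum_le_of_sum_le (summable_mul_of_sq h2f h2g) fun s => ?_
  have h1 : (∑ v ∈ s, f v * g v) ^ 2 ≤ (∑ v ∈ s, f v ^ 2) * ∑ v ∈ s, g v ^ 2 :=
    Finset.sum_mul_sq_le_sq_mul_sq s f g
  have h2 : ∑ v ∈ s, f v ^ 2 ≤ ∑' v, f v ^ 2 :=
    Summable.sum_le_tsum s (fun v _ => sq_nonneg _) h2f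
  have h3 : ∑ v ∈ s, g v ^ 2 ≤ ∑' v, g v ^ 2 :=
    Summable.sum_le_tsum s (fun v _ => sq_nonneg _) h2g
  have hs : 0 ≤ ∑ v ∈ s, f v * g v :=
    Finset.sum_nonneg fun v _ => mul_nonneg (hf v) (hg v)
  have hfs : 0 ≤ ∑ v ∈ s, f v ^ 2 := Finset.sum_nonneg fun v _ => sq_nonneg _
  have hgs : 0 ≤ ∑ v ∈ s, g v ^ 2 := Finset.sum_nonneg fun v _ => sq_nonneg _
  calc ∑ v ∈ s, f v * g v = Real.sqrt ((∑ v ∈ s, f v * g v) ^ 2) := (Real.sqrt_sq hs).symm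
    _ ≤ Real.sqrt ((∑' v, f v ^ 2) * ∑' v, g v ^ 2) :=
        Real.sqrt_le_sqrt (by nlinarith)
    _ = _ := Real.sqrt_mul (hfs.trans h2) _

lemma key_ineq {V : Type*} [DecidableEq V]
    (G : SimpleGraph V) (htree : G.IsTree)
    (w : V → V → ℂ)
    (hherm : ∀ u v, w u v = starRingEnd ℂ (w v u))
    (hskel : ∀ u v, w u v ≠ 0 ↔ G.Adj u v)
    (hrow : ∀ v, Summable (fun u => ‖w v u‖ ^ 2))
    (κ : ℝ) (hκ : 0 < κ)
    (F : Finset V)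
    (hconnF : (G.induce (↑F : Set V)).Connected)
    (hbdryF : ∀ v ∈ F, ∑' u : V, (if u ∈ F then 0 else ‖w v u‖ ^ 2) ≤ κ)
    (φ : V → ℂ) (hφ : Summable (fun v => ‖φ v‖ ^ 2))
    (hdef : ∀ v, HasSum (fun u => w v u * φ u) (Complex.I * φ v)) :
    ∑ v ∈ F, ‖φ v‖ ^ 2 ≤ κ * ∑' u : V, (if u ∈ F then 0 else ‖φ u‖ ^ 2) := by
  classical
  set t : V → ℂ := fun v => ∑' u, (if u ∈ F then 0 else w v u * φ u) with ht
  -- summability facts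
  have hsumv : ∀ v, Summable (fun u => w v u * φ u) := fun v => (hdef v).summable
  have hsumA : ∀ v, Summable (fun u => if u ∈ F then w v u * φ u else 0) := fun v =>
    summable_of_ne_finset_zero (s := F) (fun u hu => if_neg hu)
  have hsumB : ∀ v, Summable (fun u => if u ∈ F then 0 else w v u * φ u) := by
    intro v
    have := (hsumv v).sub (hsumA v)
    refine this.congr fun u => ?_
    by_cases h : u ∈ F <;> simp [h]
  -- splitting the defining equation
  have hsplit : ∀ v, Complex.I * φ v = (∑ u ∈ F, w v u * φ u) + t v := by
    intro v
    have h1 : ∑' u, (if u ∈ F then w v u * φ u else 0) = ∑ u ∈ F, w v u * φ u := by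
      rw [tsum_eq_sum (s := F) (fun u hu => if_neg hu)]
      exact Finset.sum_congr rfl fun u hu => if_pos hu
    have h2 := (hdef v).tsum_eq
    rw [← h2, ht, ← h1, ← Summable.tsum_add (hsumA v) (hsumB v)]
    exact tsum_congr fun u => by by_cases h : u ∈ F <;> simp [h]
  set Sq : ℝ := ∑ v ∈ F, ‖φ v‖ ^ 2 with hSq
  set A : ℂ := ∑ v ∈ F, ∑ u ∈ F, (starRingEnd ℂ) (φ v) * (w v u * φ u) with hA
  set B : ℂ := ∑ v ∈ F, (starRingEnd ℂ) (φ v) * t v with hB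
  have hgreen : Complex.I * (Sq : ℂ) = A + B := by
    have : ∑ v ∈ F, (starRingEnd ℂ) (φ v) * (Complex.I * φ v) = A + B := by
      rw [hA, hB, ← Finset.sum_add_distrib]
      refine Finset.sum_congr rfl fun v hv => ?_
      rw [hsplit v, mul_add, Finset.mul_sum]
    rw [← this, hSq]
    push_cast
    rw [Finset.mul_sum]
    refine Finset.sum_congr rfl fun v hv => ?_
    have h3 : (starRingEnd ℂ) (φ v) * φ v = ((‖φ v‖ : ℂ)) ^ 2 := RCLike.conj_mul (φ v)
    rw [show (starRingEnd ℂ) (φ v) * (Complex.I * φ v)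
        = Complex.I * ((starRingEnd ℂ) (φ v) * φ v) by ring, h3]
  have hAreal : (starRingEnd ℂ) A = A := by
    rw [hA, map_sum]
    conv_rhs => rw [Finset.sum_comm]
    refine Finset.sum_congr rfl fun v hv => ?_
    rw [map_sum]
    refine Finset.sum_congr rfl fun u hu => ?_
    simp only [map_mul, RingHomCompTriple.comp_apply, RingHom.id_apply,
      starRingEnd_self_apply]
    rw [← hherm u v]
    ring
  have hAim : A.im = 0 := by
    have := Complex.conj_eq_iff_im.mp hAreal
    exact this
  have hSqB : Sq = B.im := by
    have := congrArg Complex.im hgreen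
    simpa [hAim] using this
  have hSq_le_norm : Sq ≤ ‖B‖ := by
    rw [hSqB]
    exact (le_abs_self B.im).trans (Complex.abs_im_le_norm B)
  set g : V → V → ℝ := fun v u => if u ∉ F ∧ w v u ≠ 0 then ‖φ u‖ ^ 2 else 0 with hg
  have hg_nonneg : ∀ v u, 0 ≤ g v u := fun v u => by
    rw [hg]; dsimp only; split <;> positivity
  have hg_summ : ∀ v, Summable (g v) := by
    intro v
    refine Summable.of_nonneg_of_le (hg_nonneg v) (fun u => ?_) hφ
    rw [hg]; dsimp only; split
    · exact le_refl _
    · positivity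
  have htail_summ : Summable (fun u => if u ∈ F then 0 else ‖φ u‖ ^ 2) := by
    refine Summable.of_nonneg_of_le (fun u => ?_) (fun u => ?_) hφ <;>
      · split
        · positivity
        · first | exact le_refl _ | positivity
  have hTail0 : 0 ≤ ∑' u, (if u ∈ F then 0 else ‖φ u‖ ^ 2) :=
    tsum_nonneg fun u => by split <;> positivity
  -- pointwise bound on each t v via Cauchy-Schwarz and the boundary bound
  have htv : ∀ v ∈ F, ‖t v‖ ^ 2 ≤ κ * ∑' u, g v u := by
    intro v hv
    set a : V → ℝ := fun u => if u ∈ F then 0 else ‖w v u‖ with ha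
    set b : V → ℝ := fun u => if u ∉ F ∧ w v u ≠ 0 then ‖φ u‖ else 0 with hb
    have ha_nonneg : ∀ u, 0 ≤ a u := fun u => by rw [ha]; dsimp only; split <;> positivity
    have hb_nonneg : ∀ u, 0 ≤ b u := fun u => by rw [hb]; dsimp only; split <;> positivity
    have ha2 : Summable fun u => a u ^ 2 := by
      refine Summable.of_nonneg_of_le (fun u => sq_nonneg _) (fun u => ?_) (hrow v)
      by_cases h : u ∈ F <;> simp [ha, h] <;> positivity
    have hb2 : Summable fun u => b u ^ 2 := by
      refine Summable.of_nonneg_of_le (fun u => sq_nonneg _) (fun u => ?_) hφ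
      by_cases h : u ∉ F ∧ w v u ≠ 0 <;> simp [hb, h] <;> positivity
    have hb2g : ∀ u, b u ^ 2 = g v u := by
      intro u; by_cases h : u ∉ F ∧ w v u ≠ 0 <;> simp [hb, hg, h]
    have hnorm_eq : ∀ u, ‖(if u ∈ F then 0 else w v u * φ u)‖ = a u * b u := by
      intro u
      by_cases h : u ∈ F
      · simp [ha, hb, h]
      · by_cases h2 : w v u = 0 <;> simp [ha, hb, h, h2, norm_mul]
    have hsn : Summable fun u => ‖(if u ∈ F then 0 else w v u * φ u)‖ :=
      (summable_mul_of_sq ha2 hb2).congr fun u => (hnorm_eq u).symm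
    have h1 : ‖t v‖ ≤ ∑' u, a u * b u := by
      rw [ht]
      exact (norm_tsum_le_tsum_norm hsn).trans (le_of_eq (tsum_congr hnorm_eq))
    have h2 := tsum_cs a b ha_nonneg hb_nonneg ha2 hb2
    have ha2κ : ∑' u, a u ^ 2 ≤ κ := by
      refine le_trans (le_of_eq (tsum_congr fun u => ?_)) (hbdryF v hv)
      rw [ha]; dsimp only; split <;> simp
    calc ‖t v‖ ^ 2 ≤ (Real.sqrt (∑' u, a u ^ 2) * Real.sqrt (∑' u, b u ^ 2)) ^ 2 :=
          pow_le_pow_left₀ (norm_nonneg _) (h1.trans h2) 2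
      _ = (∑' u, a u ^ 2) * (∑' u, b u ^ 2) := by
          rw [mul_pow, Real.sq_sqrt (tsum_nonneg fun u => sq_nonneg _),
            Real.sq_sqrt (tsum_nonneg fun u => sq_nonneg _)]
      _ ≤ κ * (∑' u, b u ^ 2) :=
          mul_le_mul_of_nonneg_right ha2κ (tsum_nonneg fun u => sq_nonneg _)
      _ = κ * ∑' u, g v u := by rw [tsum_congr hb2g]
  -- tree fact: each u outside F has at most one neighbor in F
  have hpt : ∀ u, (∑ v ∈ F, g v u) ≤ (if u ∈ F then 0 else ‖φ u‖ ^ 2) := by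
    intro u
    by_cases hu : u ∈ F
    · simp only [hu, if_pos]
      refine le_of_eq (Finset.sum_eq_zero fun v hv => ?_)
      rw [hg]; dsimp only
      rw [if_neg]; push_neg; intro h; exact absurd hu h
    · rw [if_neg hu]
      by_cases hex : ∃ v0 ∈ F, w v0 u ≠ 0
      · obtain ⟨v0, hv0F, hv0⟩ := hex
        have hle : ∀ v ∈ F, g v u ≤ (if v = v0 then ‖φ u‖ ^ 2 else 0) := by
          intro v hvF
          by_cases hvv : v = v0
          · rw [if_pos hvv, hg]; dsimp only; split
            · exact le_refl _
            · positivity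
          · rw [if_neg hvv, hg]; dsimp only
            rw [if_neg]
            push_neg
            intro _
            by_contra hw
            exact hvv (tree_unique_nbr G htree (↑F) hconnF (by simpa using hu)
              (by simpa using hvF) (by simpa using hv0F)
              ((hskel v u).mp hw) ((hskel v0 u).mp hv0))
        calc ∑ v ∈ F, g v u ≤ ∑ v ∈ F, (if v = v0 then ‖φ u‖ ^ 2 else 0) :=
              Finset.sum_le_sum hle
          _ = ‖φ u‖ ^ 2 := by rw [Finset.sum_ite_eq' F v0 (fun _ => ‖φ u‖ ^ 2), if_pos hv0F]
      · push_neg at hex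
        refine le_trans (le_of_eq (Finset.sum_eq_zero fun v hv => ?_)) (by positivity)
        rw [hg]; dsimp only
        rw [if_neg]
        push_neg
        intro _
        exact hex v hv
  have hsum_t : ∑ v ∈ F, ‖t v‖ ^ 2 ≤ κ * ∑' u, (if u ∈ F then 0 else ‖φ u‖ ^ 2) := by
    calc ∑ v ∈ F, ‖t v‖ ^ 2 ≤ ∑ v ∈ F, κ * ∑' u, g v u := Finset.sum_le_sum htv
      _ = κ * ∑ v ∈ F, ∑' u, g v u := by rw [Finset.mul_sum]
      _ = κ * ∑' u, ∑ v ∈ F, g v u := by rw [Summable.tsum_finsetSum fun v _ => hg_summ v]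
      _ ≤ κ * ∑' u, (if u ∈ F then 0 else ‖φ u‖ ^ 2) := by
          refine mul_le_mul_of_nonneg_left (Summable.tsum_le_tsum hpt ?_ htail_summ) hκ.le
          exact summable_sum fun v _ => hg_summ v
  have hM : ‖B‖ ≤ ∑ v ∈ F, ‖φ v‖ * ‖t v‖ := by
    refine (norm_sum_le _ _).trans (le_of_eq (Finset.sum_congr rfl fun v hv => ?_))
    rw [norm_mul, RCLike.norm_conj]
  have hCS := Finset.sum_mul_sq_le_sq_mul_sq F (fun v => ‖φ v‖) (fun v => ‖t v‖)
  have hSq0 : 0 ≤ Sq := Finset.sum_nonneg fun v _ => sq_nonneg _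
  have hfinal : Sq ^ 2 ≤ Sq * (κ * ∑' u, (if u ∈ F then 0 else ‖φ u‖ ^ 2)) := by
    calc Sq ^ 2 ≤ (∑ v ∈ F, ‖φ v‖ * ‖t v‖) ^ 2 :=
          pow_le_pow_left₀ hSq0 (hSq_le_norm.trans hM) 2
      _ ≤ (∑ v ∈ F, ‖φ v‖ ^ 2) * (∑ v ∈ F, ‖t v‖ ^ 2) := hCS
      _ ≤ Sq * (κ * ∑' u, (if u ∈ F then 0 else ‖φ u‖ ^ 2)) :=
          mul_le_mul_of_nonneg_left hsum_t hSq0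
  rcases eq_or_lt_of_le hSq0 with h0 | h0
  · rw [← h0]
    exact mul_nonneg hκ.le hTail0
  · have h2 : Sq * Sq ≤ Sq * (κ * ∑' u, (if u ∈ F then 0 else ‖φ u‖ ^ 2)) := by
      have hp : Sq * Sq = Sq ^ 2 := (pow_two Sq).symm
      rw [hp]; exact hfinal
    exact le_of_mul_le_mul_left h2 h0

/-- **key inequality in the self-adjointness criterion.** Under the hypotheses
of the essential self-adjointness criterion on a tree, any `ℓ²` function `φ` with
`T* φ = i φ` satisfies `Σ_{v ∈ S n} |φ v|² ≤ κ Σ_{v ∉ S n} |φ v|²` for every `n`, and hence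
`φ = 0`. -/
theorem stmt12 {V : Type*} [Countable V] [DecidableEq V]
    (G : SimpleGraph V) (htree : G.IsTree)
    (w : V → V → ℂ)
    (hherm : ∀ u v, w u v = starRingEnd ℂ (w v u))
    (hskel : ∀ u v, w u v ≠ 0 ↔ G.Adj u v)
    (hrow : ∀ v, Summable (fun u => ‖w v u‖ ^ 2))
    (κ : ℝ) (hκ : 0 < κ)
    (S : ℕ → Finset V)
    (hmono : ∀ n, S n ⊆ S (n + 1))
    (hexh : ∀ v, ∃ n, v ∈ S n)
    (hconn : ∀ n, (G.induce (↑(S n) : Set V)).Connected)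
    (hbdry : ∀ n, ∀ v ∈ S n, ∑' u : V, (if u ∈ S n then 0 else ‖w v u‖ ^ 2) ≤ κ)
    (φ : V → ℂ) (hφ : Summable (fun v => ‖φ v‖ ^ 2))
    (hdef : ∀ v, HasSum (fun u => w v u * φ u) (Complex.I * φ v)) :
    (∀ n, ∑ v ∈ S n, ‖φ v‖ ^ 2 ≤ κ * ∑' u : V, (if u ∈ S n then 0 else ‖φ u‖ ^ 2)) ∧
    φ = 0 := by
  have hkey : ∀ n, ∑ v ∈ S n, ‖φ v‖ ^ 2 ≤ κ * ∑' u : V, (if u ∈ S n then 0 else ‖φ u‖ ^ 2) :=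
    fun n => key_ineq G htree w hherm hskel hrow κ hκ (S n) (hconn n) (hbdry n) φ hφ hdef
  refine ⟨hkey, ?_⟩
  have hmono' : Monotone S := monotone_nat_of_le_succ hmono
  have htendS : Tendsto S atTop atTop :=
    tendsto_atTop_finset_of_monotone hmono' hexh
  have hL : Tendsto (fun n => ∑ v ∈ S n, ‖φ v‖ ^ 2) atTop (𝓝 (∑' v, ‖φ v‖ ^ 2)) :=
    hφ.hasSum.comp htendS
  have htail_summ : ∀ F : Finset V, Summable (fun u => if u ∈ F then 0 else ‖φ u‖ ^ 2) := by
    intro F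
    refine Summable.of_nonneg_of_le (fun u => ?_) (fun u => ?_) hφ <;> by_cases h : u ∈ F <;>
      simp [h] <;> positivity
  have htail_eq : ∀ n, ∑' u : V, (if u ∈ S n then 0 else ‖φ u‖ ^ 2)
      = (∑' v, ‖φ v‖ ^ 2) - ∑ v ∈ S n, ‖φ v‖ ^ 2 := by
    intro n
    have h1 : Summable (fun u => if u ∈ S n then ‖φ u‖ ^ 2 else 0) :=
      summable_of_ne_finset_zero (s := S n) (fun u hu => if_neg hu)
    have hadd : ∑' v, ‖φ v‖ ^ 2 = (∑' u, (if u ∈ S n then ‖φ u‖ ^ 2 else 0))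
        + ∑' u, (if u ∈ S n then 0 else ‖φ u‖ ^ 2) := by
      rw [← Summable.tsum_add h1 (htail_summ (S n))]
      exact tsum_congr fun u => by by_cases h : u ∈ S n <;> simp [h]
    have h2 : ∑' u, (if u ∈ S n then ‖φ u‖ ^ 2 else 0) = ∑ v ∈ S n, ‖φ v‖ ^ 2 := by
      rw [tsum_eq_sum (s := S n) fun u hu => if_neg hu]
      exact Finset.sum_congr rfl fun u hu => if_pos hu
    rw [hadd, h2]; ring
  have htail0 : Tendsto (fun n => κ * ∑' u : V, (if u ∈ S n then 0 else ‖φ u‖ ^ 2))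
      atTop (𝓝 0) := by
    have h1 : Tendsto (fun n => (∑' v, ‖φ v‖ ^ 2) - ∑ v ∈ S n, ‖φ v‖ ^ 2) atTop (𝓝 0) := by
      have := tendsto_const_nhds (x := ∑' v, ‖φ v‖ ^ 2) (f := atTop (α := ℕ)) |>.sub hL
      simpa using this
    have h2 := h1.const_mul κ
    simp only [mul_zero] at h2
    refine h2.congr fun n => ?_
    rw [htail_eq n]
  funext v
  obtain ⟨n0, hn0⟩ := hexh v
  have hev : ∀ᶠ n in atTop, ‖φ v‖ ^ 2 ≤ κ * ∑' u : V, (if u ∈ S n then 0 else ‖φ u‖ ^ 2) := by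
    filter_upwards [eventually_ge_atTop n0] with m hm
    exact le_trans (Finset.single_le_sum (f := fun u => ‖φ u‖ ^ 2)
      (fun u _ => sq_nonneg _) (hmono' hm hn0)) (hkey m)
  have hle : ‖φ v‖ ^ 2 ≤ 0 := ge_of_tendsto htail0 hev
  have hz : ‖φ v‖ ^ 2 = 0 := le_antisymm hle (sq_nonneg _)
  have : φ v = 0 := by
    simpa using hz
  simpa using this
end

section
/- Let κ > 0, 0 < α < 2, and let 0 < x_1 < x_2 < ⋯ be a unit-rate Poisson process on (0,∞). Define τ_κ = inf{t ∈ ℕ : Σ_{k ≥ t+1} x_k^{-2/α} ≤ κ}. Then E[τ_κ] < ∞, and E[τ_κ] → 0 as κ → ∞. -/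
open MeasureTheory ProbabilityTheory Filter Set
open scoped ENNReal

private lemma aux_measurable_sInf {Ω : Type*} [MeasurableSpace Ω] (B : ℕ → Set Ω)
    (hB : ∀ t, MeasurableSet (B t)) :
    Measurable fun ω => sInf {t | ω ∈ B t} := by
  apply measurable_to_countable'
  intro n
  rcases eq_or_ne n 0 with rfl | hn
  · have h : (fun ω => sInf {t | ω ∈ B t}) ⁻¹' {0} = B 0 ∪ ⋂ m, (B m)ᶜ := by
      ext ω
      simp only [Set.mem_preimage, Set.mem_singleton_iff, Nat.sInf_eq_zero, Set.mem_union,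
        Set.mem_iInter, Set.mem_compl_iff, Set.mem_setOf_eq, Set.eq_empty_iff_forall_notMem]
    rw [h]
    exact (hB 0).union (MeasurableSet.iInter fun m => (hB m).compl)
  · have h : (fun ω => sInf {t | ω ∈ B t}) ⁻¹' {n} = B n ∩ ⋂ m, ⋂ _ : m < n, (B m)ᶜ := by
      ext ω
      simp only [Set.mem_preimage, Set.mem_singleton_iff, Set.mem_inter_iff, Set.mem_iInter,
        Set.mem_compl_iff]
      constructor
      · intro hsn
        have hne : {t | ω ∈ B t}.Nonempty := by
          by_contra hne
          rw [Set.not_nonempty_iff_eq_empty] at hne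
          rw [hne, Nat.sInf_empty] at hsn
          exact hn hsn.symm
        refine ⟨by rw [← hsn]; exact Nat.sInf_mem hne, fun m hm => ?_⟩
        exact Nat.notMem_of_lt_sInf (by rw [hsn]; exact hm)
      · rintro ⟨hmem, hlt⟩
        refine le_antisymm (Nat.sInf_le hmem) ?_
        by_contra h2
        push_neg at h2
        have hne2 : {t | ω ∈ B t}.Nonempty := ⟨n, hmem⟩
        exact hlt _ h2 (Nat.sInf_mem hne2)
    rw [h]
    exact (hB n).inter (.iInter fun m => .iInter fun _ => (hB m).compl)

/-- Let `κ > 0`, `0 < α < 2`, and let `0 < x_1 < x_2 < ⋯` be a unit-rate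
Poisson process on `(0,∞)` (realized as `x_k = E_1 + ⋯ + E_k` with `(E_j)` i.i.d. exponential
of mean 1). With `τ_κ = inf {t ∈ ℕ : Σ_{k ≥ t+1} x_k^{-2/α} ≤ κ}`, one has `𝔼[τ_κ] < ∞`, and
`𝔼[τ_κ] → 0` as `κ → ∞`. -/
theorem stmt14 {Ω : Type*} [MeasureSpace Ω] [IsProbabilityMeasure (ℙ : Measure Ω)]
    (α : ℝ) (hα0 : 0 < α) (hα2 : α < 2)
    (E : ℕ → Ω → ℝ) (hmeas : ∀ j, Measurable (E j))
    (hindep : iIndepFun E ℙ)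
    (hexp : ∀ j, ∀ t : ℝ, 0 ≤ t → ℙ {ω | t < E j ω} = ENNReal.ofReal (Real.exp (-t)))
    (τ : ℝ → Ω → ℕ)
    (hτ : ∀ κ : ℝ, ∀ ω, τ κ ω = sInf {t : ℕ |
      ∑' k : ℕ, (∑ j ∈ Finset.range (t + k + 1), E j ω) ^ (-(2 / α)) ≤ κ}) :
    (∀ κ : ℝ, 0 < κ → Integrable (fun ω => (τ κ ω : ℝ)) ℙ) ∧
    Tendsto (fun κ : ℝ => ∫ ω, (τ κ ω : ℝ) ∂ℙ) atTop (nhds 0) := by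
  classical
  have hp1 : (1:ℝ) < 2 / α := (one_lt_div hα0).mpr hα2
  have hqle : -(2 / α) ≤ 0 := by linarith
  set q : ℝ := -(2 / α) with hq
  set S : ℕ → Ω → ℝ := fun m ω => ∑ j ∈ Finset.range m, E j ω with hSdef
  have hSmeas : ∀ m, Measurable (S m) := fun m => Finset.measurable_sum _ fun j _ => hmeas j
  set bad : ℕ → Set Ω := fun m => {ω | S m ω ≤ (m:ℝ)/2} with hbaddef
  have hbadmeas : ∀ m, MeasurableSet (bad m) :=
    fun m => measurableSet_le (hSmeas m) measurable_const
  -- a.e. positivity of all E j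
  have haepos : ∀ᵐ ω ∂ℙ, ∀ j, 0 < E j ω := by
    rw [ae_all_iff]
    intro j
    have h0 := hexp j 0 le_rfl
    have hms : MeasurableSet {ω | 0 < E j ω} := measurableSet_lt measurable_const (hmeas j)
    have hc : ℙ {ω | 0 < E j ω}ᶜ = 0 := by
      rw [measure_compl hms (measure_ne_top _ _), h0]
      simp
    rw [ae_iff, ← Set.compl_setOf]
    exact hc
  -- integrability of exp(-X) for a.e.-nonnegative X
  have hintexp : ∀ (X : Ω → ℝ), Measurable X → (∀ᵐ ω ∂ℙ, 0 ≤ X ω) →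
      Integrable (fun ω => Real.exp (-1 * X ω)) ℙ := by
    intro X hX hX0
    refine Integrable.mono' (integrable_const (1:ℝ))
      ((hX.const_mul (-1)).exp.aestronglyMeasurable) ?_
    filter_upwards [hX0] with ω h0
    rw [Real.norm_eq_abs, abs_of_pos (Real.exp_pos _)]
    exact Real.exp_le_one_iff.2 (by nlinarith)
  -- the mgf of each E j at -1 is 1/2
  have hmgf : ∀ j, mgf (E j) ℙ (-1) = 2⁻¹ := by
    intro j
    have hpos : ∀ᵐ ω ∂ℙ, 0 < E j ω := by
      filter_upwards [haepos] with ω h using h j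
    have hint : Integrable (fun ω => Real.exp (-1 * E j ω)) ℙ :=
      hintexp _ (hmeas j) (hpos.mono fun ω h => h.le)
    have hnn : 0 ≤ᵐ[ℙ] fun ω => Real.exp (-1 * E j ω) :=
      ae_of_all _ fun ω => (Real.exp_pos _).le
    have hbdd : (fun ω => Real.exp (-1 * E j ω)) ≤ᵐ[ℙ] fun _ => (1:ℝ) := by
      filter_upwards [hpos] with ω h
      exact Real.exp_le_one_iff.2 (by nlinarith)
    have key := hint.integral_eq_integral_Ioc_meas_le hnn hbdd
    have hset : ∀ t ∈ Ioc (0:ℝ) 1,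
        (ℙ : Measure Ω).real {a | t ≤ Real.exp (-1 * E j a)} = 1 - t := by
      intro t ht
      rw [measureReal_def]
      obtain ⟨ht0, ht1⟩ := ht
      have hlog : (0:ℝ) ≤ -Real.log t := by
        rw [neg_nonneg]; exact Real.log_nonpos ht0.le ht1
      have hseteq : {a | t ≤ Real.exp (-1 * E j a)} = {a | -Real.log t < E j a}ᶜ := by
        ext a
        simp only [Set.mem_setOf_eq, Set.mem_compl_iff, not_lt]
        rw [← Real.log_le_iff_le_exp ht0]
        constructor <;> intro h <;> linarith
      rw [hseteq, measure_compl (measurableSet_lt measurable_const (hmeas j))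
          (measure_ne_top _ _), hexp j _ hlog, measure_univ, neg_neg, Real.exp_log ht0,
        ENNReal.toReal_sub_of_le (by simpa using ENNReal.ofReal_le_one.2 ht1) ENNReal.one_ne_top,
        ENNReal.toReal_one, ENNReal.toReal_ofReal ht0.le]
    rw [mgf]
    rw [key, setIntegral_congr_fun measurableSet_Ioc hset,
      ← intervalIntegral.integral_of_le zero_le_one,
      intervalIntegral.integral_sub intervalIntegrable_const intervalIntegral.intervalIntegrable_id,
      intervalIntegral.integral_const, integral_id]
    norm_num
  -- Chernoff bound
  set c : ℝ := Real.exp 2⁻¹ * 2⁻¹ with hcdef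
  have hc0 : 0 < c := by positivity
  have hc1 : c < 1 := by
    have h1 : Real.exp 2⁻¹ * Real.exp 2⁻¹ = Real.exp 1 := by
      rw [← Real.exp_add]; norm_num
    have h2 := Real.exp_one_lt_d9
    nlinarith [Real.exp_pos (2⁻¹:ℝ)]
  have hch : ∀ m : ℕ, (ℙ (bad m)).toReal ≤ c ^ m := by
    intro m
    have hSfun : S m = ∑ j ∈ Finset.range m, E j := by
      funext ω; simp [hSdef, Finset.sum_apply]
    have hSnn : ∀ᵐ ω ∂ℙ, 0 ≤ S m ω := by
      filter_upwards [haepos] with ω h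
      exact Finset.sum_nonneg fun j _ => (h j).le
    have hint : Integrable (fun ω => Real.exp (-1 * S m ω)) ℙ := hintexp _ (hSmeas m) hSnn
    have hmgfS : mgf (S m) ℙ (-1) = (2⁻¹:ℝ) ^ m := by
      rw [hSfun, hindep.mgf_sum hmeas (Finset.range m),
        Finset.prod_congr rfl fun j _ => hmgf j]
      simp
    have hcher := measure_le_le_exp_mul_mgf (X := S m) (μ := ℙ) ((m:ℝ)/2)
      (by norm_num : (-1:ℝ) ≤ 0) hint
    rw [hmgfS] at hcher
    refine le_trans hcher (le_of_eq ?_)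
    rw [neg_neg, one_mul, div_eq_mul_inv, Real.exp_nat_mul, hcdef, mul_pow]
  -- Borel-Cantelli
  have hgeom : Summable fun m : ℕ => c ^ m := summable_geometric_of_lt_one hc0.le hc1
  have hle' : ∀ m, ℙ (bad m) ≤ ENNReal.ofReal (c ^ m) := fun m =>
    (ENNReal.le_ofReal_iff_toReal_le (measure_ne_top _ _) (by positivity)).2 (hch m)
  have hmeassum : (∑' m, ℙ (bad m)) ≠ ∞ := by
    refine ne_of_lt (lt_of_le_of_lt (ENNReal.tsum_le_tsum hle') ?_)
    rw [← ENNReal.ofReal_tsum_of_nonneg (fun m => by positivity) hgeom]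
    exact ENNReal.ofReal_lt_top
  have hBC : ∀ᵐ ω ∂ℙ, ∀ᶠ m in atTop, ω ∉ bad m := ae_eventually_notMem hmeassum
  -- the dominating random variable G
  set G : Ω → ℝ≥0∞ := fun ω => ∑' m, Set.indicator (bad m) (fun _ => (m:ℝ≥0∞)) ω with hGdef
  have hGmeas : Measurable G :=
    Measurable.ennreal_tsum fun m => measurable_const.indicator (hbadmeas m)
  have hGlt : ∫⁻ ω, G ω ∂ℙ ≠ ∞ := by
    have h1 : ∫⁻ ω, G ω ∂ℙ = ∑' m, ∫⁻ ω, Set.indicator (bad m) (fun _ => (m:ℝ≥0∞)) ω ∂ℙ := by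
      rw [hGdef]
      exact lintegral_tsum fun m => (measurable_const.indicator (hbadmeas m)).aemeasurable
    have h2 : ∀ m : ℕ, ∫⁻ ω, Set.indicator (bad m) (fun _ => (m:ℝ≥0∞)) ω ∂ℙ
        ≤ ENNReal.ofReal ((m:ℝ) * c ^ m) := by
      intro m
      rw [lintegral_indicator_const (hbadmeas m),
        ENNReal.ofReal_mul (Nat.cast_nonneg m), ENNReal.ofReal_natCast]
      exact mul_le_mul_right (hle' m) _
    have h3 : Summable fun m : ℕ => (m:ℝ) * c ^ m := by
      have := summable_pow_mul_geometric_of_norm_lt_one 1 (r := c)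
        (by rwa [Real.norm_eq_abs, abs_of_pos hc0])
      exact this.congr fun m => by rw [pow_one]
    refine ne_of_lt (lt_of_le_of_lt (h1 ▸ ENNReal.tsum_le_tsum h2) ?_)
    rw [← ENNReal.ofReal_tsum_of_nonneg (fun m => by positivity) h3]
    exact ENNReal.ofReal_lt_top
  have hGae : ∀ᵐ ω ∂ℙ, G ω < ∞ := ae_lt_top hGmeas hGlt
  have hgint : Integrable (fun ω => (G ω).toReal) ℙ :=
    integrable_toReal_of_lintegral_ne_top hGmeas.aemeasurable hGlt
  -- deterministic comparison series
  set bb : ℕ → ℝ := fun m => ((m:ℝ)/2) ^ q with hbbdef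
  have hbbnn : ∀ m, 0 ≤ bb m := fun m => Real.rpow_nonneg (by positivity) _
  have hbbsum : Summable bb := by
    have h1 : Summable fun m : ℕ => (m:ℝ) ^ q := Real.summable_nat_rpow.2 (by rw [hq]; linarith)
    have h2 : ∀ m : ℕ, bb m = (m:ℝ) ^ q * ((2:ℝ)⁻¹) ^ q := fun m => by
      show ((m:ℝ)/2) ^ q = _
      rw [div_eq_mul_inv, Real.mul_rpow (Nat.cast_nonneg m) (by norm_num)]
    exact (h1.mul_right _).congr fun m => (h2 m).symm
  set tailb : ℕ → ℝ := fun n => ∑' k, bb (k + n) with htailbdef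
  have htailb0 : Tendsto tailb atTop (nhds 0) := by
    have heq : ∀ n, tailb n = (∑' m, bb m) - ∑ i ∈ Finset.range n, bb i := by
      intro n
      have := Summable.sum_add_tsum_nat_add n hbbsum
      rw [htailbdef]
      dsimp only
      linarith
    have h2 : Tendsto (fun n => (∑' m, bb m) - ∑ i ∈ Finset.range n, bb i) atTop (nhds 0) := by
      have h3 := hbbsum.hasSum.tendsto_sum_nat
      have h4 : Tendsto (fun n : ℕ => (∑' m, bb m) - ∑ i ∈ Finset.range n, bb i) atTop
          (nhds ((∑' m, bb m) - ∑' m, bb m)) := tendsto_const_nhds.sub h3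
      simpa using h4
    exact h2.congr fun n => (heq n).symm
  -- positivity of partial sums
  have hptS : ∀ ω, (∀ j, 0 < E j ω) → ∀ m : ℕ, 1 ≤ m → 0 < S m ω := by
    intro ω h m hm
    exact Finset.sum_pos (fun j _ => h j) (Finset.nonempty_range_iff.2 (by omega))
  -- term-wise comparison
  have hcomp : ∀ ω, ∀ m : ℕ, 1 ≤ m → ω ∉ bad m → S m ω ^ q ≤ bb m := by
    intro ω m hm hnb
    have hmpos : (0:ℝ) < (m:ℝ)/2 := by
      have : (0:ℝ) < (m:ℝ) := by exact_mod_cast hm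
      linarith
    have hhalf : (m:ℝ)/2 ≤ S m ω := by
      have : ¬ (S m ω ≤ (m:ℝ)/2) := hnb
      linarith [not_le.1 this]
    exact Real.rpow_le_rpow_of_nonpos hmpos hhalf hqle
  -- summability of the random series
  have hptsum : ∀ ω, (∀ j, 0 < E j ω) → (∀ᶠ m in atTop, ω ∉ bad m) →
      ∀ t, Summable (fun k => S (t + k + 1) ω ^ q) := by
    intro ω hpos hev t
    obtain ⟨M, hM⟩ := eventually_atTop.1 hev
    refine (summable_nat_add_iff M).mp ?_
    refine Summable.of_nonneg_of_le
      (fun k => Real.rpow_nonneg (hptS ω hpos _ (by omega)).le _) (fun k => ?_)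
      ((summable_nat_add_iff (t + M + 1)).2 hbbsum)
    have hidx : k + (t + M + 1) = t + (k + M) + 1 := by omega
    rw [hidx]
    exact hcomp ω _ (by omega) (hM _ (by omega))
  -- tail bound
  have hpttail : ∀ ω, (∀ j, 0 < E j ω) → (∀ᶠ m in atTop, ω ∉ bad m) →
      ∀ t, (∀ m, t < m → ω ∉ bad m) →
      (∑' k, S (t + k + 1) ω ^ q) ≤ tailb (t + 1) := by
    intro ω hpos hev t hgood
    rw [htailbdef]
    refine Summable.tsum_le_tsum (fun k => ?_) (hptsum ω hpos hev t)
      ((summable_nat_add_iff (t + 1)).2 hbbsum)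
    have hidx : k + (t + 1) = t + k + 1 := by omega
    rw [hidx]
    exact hcomp ω _ (by omega) (hgood _ (by omega))
  -- the real tsum equals the toReal of the ENNReal tsum
  have hpteq : ∀ ω, (∀ j, 0 < E j ω) → (∀ᶠ m in atTop, ω ∉ bad m) → ∀ t,
      (∑' k, ENNReal.ofReal (S (t + k + 1) ω ^ q)).toReal = ∑' k, S (t + k + 1) ω ^ q := by
    intro ω hpos hev t
    rw [← ENNReal.ofReal_tsum_of_nonneg
        (fun k => Real.rpow_nonneg (hptS _ hpos _ (by omega)).le _) (hptsum ω hpos hev t),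
      ENNReal.toReal_ofReal
        (tsum_nonneg fun k => Real.rpow_nonneg (hptS _ hpos _ (by omega)).le _)]
  -- choose N for given κ > 0
  have hNex : ∀ κ : ℝ, 0 < κ → ∃ N : ℕ, ∀ t, N ≤ t → tailb (t + 1) ≤ κ := by
    intro κ hκ
    have h1 : Tendsto (fun t : ℕ => tailb (t + 1)) atTop (nhds 0) :=
      htailb0.comp (tendsto_add_atTop_nat 1)
    obtain ⟨N, hN⟩ := eventually_atTop.1 (h1.eventually_lt_const hκ)
    exact ⟨N, fun t ht => (hN t ht).le⟩
  -- membership of max N (sSup bad + 1) in the defining set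
  have hptmem : ∀ ω, (∀ j, 0 < E j ω) → (∀ᶠ m in atTop, ω ∉ bad m) →
      ∀ κ : ℝ, ∀ N : ℕ, (∀ t, N ≤ t → tailb (t + 1) ≤ κ) →
      max N (sSup {m | ω ∈ bad m} + 1) ∈
        {t : ℕ | ∑' k : ℕ, (∑ j ∈ Finset.range (t + k + 1), E j ω) ^ (-(2 / α)) ≤ κ} := by
    intro ω hpos hev κ N hN
    obtain ⟨M, hM⟩ := eventually_atTop.1 hev
    have hbdd : BddAbove {m | ω ∈ bad m} := ⟨M, fun m hm => by
      by_contra h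
      push_neg at h
      exact hM m h.le hm⟩
    have hrgood : ∀ m, sSup {m | ω ∈ bad m} < m → ω ∉ bad m := fun m hm hmem =>
      absurd (le_csSup hbdd hmem) (not_le.2 hm)
    have h2 : sSup {m | ω ∈ bad m} + 1 ≤ max N (sSup {m | ω ∈ bad m} + 1) :=
      le_max_right _ _
    show (∑' k : ℕ, S (max N (sSup {m | ω ∈ bad m} + 1) + k + 1) ω ^ q) ≤ κ
    refine le_trans (hpttail ω hpos hev _ (fun m hm => hrgood m (by omega))) ?_
    exact hN _ (le_max_left _ _)
  -- sSup of the bad set is bounded by G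
  have hptr : ∀ ω, (∀ᶠ m in atTop, ω ∉ bad m) → G ω < ⊤ →
      ((sSup {m | ω ∈ bad m} : ℕ) : ℝ) ≤ (G ω).toReal := by
    intro ω hev hG
    obtain ⟨M, hM⟩ := eventually_atTop.1 hev
    have hbdd : BddAbove {m | ω ∈ bad m} := ⟨M, fun m hm => by
      by_contra h
      push_neg at h
      exact hM m h.le hm⟩
    have hne : {m | ω ∈ bad m}.Nonempty := ⟨0, by simp [hbaddef, hSdef]⟩
    have hmem := Nat.sSup_mem hne hbdd
    have h1 : ((sSup {m | ω ∈ bad m} : ℕ) : ℝ≥0∞) ≤ G ω := by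
      rw [hGdef]
      refine le_trans (le_of_eq ?_) (ENNReal.le_tsum (sSup {m | ω ∈ bad m}))
      rw [Set.indicator_of_mem (show ω ∈ bad _ from hmem)]
    have h2 := ENNReal.toReal_mono hG.ne h1
    simpa using h2
  -- a.e. strong measurability of τ κ
  have hτmeas : ∀ κ : ℝ, AEStronglyMeasurable (fun ω => (τ κ ω : ℝ)) ℙ := by
    intro κ
    have hm : Measurable fun ω =>
        sInf {t : ℕ | ω ∈ {ω' | (∑' k, ENNReal.ofReal (S (t + k + 1) ω' ^ q)).toReal ≤ κ}} :=
      aux_measurable_sInf _ fun t => measurableSet_le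
        (Measurable.ennreal_toReal (Measurable.ennreal_tsum fun k =>
          ((hSmeas _).pow measurable_const).ennreal_ofReal)) measurable_const
    have hm2 : Measurable fun ω => ((sInf {t : ℕ |
        ω ∈ {ω' | (∑' k, ENNReal.ofReal (S (t + k + 1) ω' ^ q)).toReal ≤ κ}} : ℕ) : ℝ) :=
      measurable_from_top.comp hm
    refine hm2.aestronglyMeasurable.congr ?_
    filter_upwards [haepos, hBC] with ω hpos hev
    have heq : sInf {t : ℕ |
        ω ∈ {ω' | (∑' k, ENNReal.ofReal (S (t + k + 1) ω' ^ q)).toReal ≤ κ}} = τ κ ω := by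
      rw [hτ κ ω]
      congr 1
      ext t
      simp only [Set.mem_setOf_eq]
      rw [hpteq ω hpos hev t]
    exact_mod_cast heq
  -- integrability
  have hInt : ∀ κ : ℝ, 0 < κ → Integrable (fun ω => (τ κ ω : ℝ)) ℙ := by
    intro κ hκ
    obtain ⟨N, hN⟩ := hNex κ hκ
    refine Integrable.mono' ((integrable_const ((N:ℝ) + 1)).add hgint) (hτmeas κ) ?_
    filter_upwards [haepos, hBC, hGae] with ω hpos hev hG
    have h1 : τ κ ω ≤ max N (sSup {m | ω ∈ bad m} + 1) := by
      rw [hτ κ ω]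
      exact Nat.sInf_le (hptmem ω hpos hev κ N hN)
    have h2 := hptr ω hev hG
    rw [Real.norm_eq_abs, abs_of_nonneg (Nat.cast_nonneg _)]
    have h3 : (τ κ ω : ℝ) ≤ ((max N (sSup {m | ω ∈ bad m} + 1) : ℕ) : ℝ) :=
      Nat.cast_le.2 h1
    have h4 : ((max N (sSup {m | ω ∈ bad m} + 1) : ℕ) : ℝ)
        ≤ (N : ℝ) + 1 + ((sSup {m | ω ∈ bad m} : ℕ) : ℝ) := by
      rw [Nat.cast_max]
      push_cast
      apply max_le
      · have := Nat.cast_nonneg (α := ℝ) (sSup {m | ω ∈ bad m})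
        linarith
      · linarith
    show (τ κ ω : ℝ) ≤ (N : ℝ) + 1 + (G ω).toReal
    linarith
  refine ⟨hInt, ?_⟩
  -- monotonicity in κ
  have hmono : ∀ κ κ' : ℝ, 0 < κ → κ ≤ κ' → ∀ᵐ ω ∂ℙ, (τ κ' ω : ℝ) ≤ (τ κ ω : ℝ) := by
    intro κ κ' hκ hκκ'
    obtain ⟨N, hN⟩ := hNex κ hκ
    filter_upwards [haepos, hBC] with ω hpos hev
    have hne : {t : ℕ | ∑' k : ℕ, (∑ j ∈ Finset.range (t + k + 1), E j ω) ^ (-(2 / α))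
        ≤ κ}.Nonempty := ⟨_, hptmem ω hpos hev κ N hN⟩
    have hm1 : ∑' k : ℕ, (∑ j ∈ Finset.range (τ κ ω + k + 1), E j ω) ^ (-(2 / α)) ≤ κ := by
      have := Nat.sInf_mem hne
      rw [← hτ κ ω] at this
      exact this
    have : τ κ' ω ≤ τ κ ω := by
      rw [hτ κ' ω]
      exact Nat.sInf_le (le_trans hm1 hκκ')
    exact_mod_cast this
  -- a.e. eventual vanishing
  have hzero : ∀ᵐ ω ∂ℙ, ∀ᶠ n : ℕ in atTop, (τ ((n : ℝ) + 1) ω : ℝ) = 0 := by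
    refine ae_of_all _ fun ω => ?_
    set x := ∑' k : ℕ, (∑ j ∈ Finset.range (0 + k + 1), E j ω) ^ (-(2 / α)) with hx
    filter_upwards [eventually_ge_atTop ⌈x⌉₊] with n hn
    have hxn : x ≤ (n : ℝ) + 1 := by
      have h1 := Nat.le_ceil x
      have h2 : ((⌈x⌉₊ : ℕ) : ℝ) ≤ (n : ℝ) := Nat.cast_le.2 hn
      linarith
    have h0 : τ ((n : ℝ) + 1) ω = 0 := by
      rw [hτ]
      exact Nat.le_zero.1 (Nat.sInf_le hxn)
    rw [h0, Nat.cast_zero]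
  -- bound for κ = 1
  obtain ⟨N₁, hN₁⟩ := hNex 1 one_pos
  have hbound1 : ∀ᵐ ω ∂ℙ, (τ (1:ℝ) ω : ℝ) ≤ (N₁ : ℝ) + 1 + (G ω).toReal := by
    filter_upwards [haepos, hBC, hGae] with ω hpos hev hG
    have h1 : τ 1 ω ≤ max N₁ (sSup {m | ω ∈ bad m} + 1) := by
      rw [hτ 1 ω]
      exact Nat.sInf_le (hptmem ω hpos hev 1 N₁ hN₁)
    have h2 := hptr ω hev hG
    have h3 : (τ 1 ω : ℝ) ≤ ((max N₁ (sSup {m | ω ∈ bad m} + 1) : ℕ) : ℝ) := Nat.cast_le.2 h1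
    rw [Nat.cast_max] at h3
    push_cast at h3
    rcases max_cases ((N₁:ℝ)) (((sSup {m | ω ∈ bad m} : ℕ):ℝ) + 1) with ⟨hEq, _⟩ | ⟨hEq, _⟩ <;>
      rw [hEq] at h3
    · have := Nat.cast_nonneg (α := ℝ) (sSup {m | ω ∈ bad m})
      have := ENNReal.toReal_nonneg (a := G ω)
      linarith
    · linarith
  -- dominated convergence along ℕ
  have hseq : Tendsto (fun n : ℕ => ∫ ω, (τ ((n : ℝ) + 1) ω : ℝ) ∂ℙ) atTop (nhds 0) := by
    have h := tendsto_integral_of_dominated_convergence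
      (F := fun n : ℕ => fun ω => (τ ((n : ℝ) + 1) ω : ℝ)) (f := fun _ => (0:ℝ))
      (μ := ℙ) (bound := fun ω => (N₁ : ℝ) + 1 + (G ω).toReal)
      (fun n => hτmeas _) ((integrable_const ((N₁:ℝ) + 1)).add hgint) ?_ ?_
    · simpa using h
    · intro n
      filter_upwards [hmono 1 ((n : ℝ) + 1) one_pos (by
        have : (0:ℝ) ≤ (n:ℝ) := Nat.cast_nonneg n
        linarith), hbound1] with ω hm hb
      rw [Real.norm_eq_abs, abs_of_nonneg (Nat.cast_nonneg _)]
      linarith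
    · filter_upwards [hzero] with ω hev
      exact Tendsto.congr' (hev.mono fun n hn => hn.symm) tendsto_const_nhds
  have hJ : Tendsto (fun n : ℕ => ∫ ω, (τ (n : ℝ) ω : ℝ) ∂ℙ) atTop (nhds 0) := by
    rw [← tendsto_add_atTop_iff_nat 1]
    have heq : (fun n : ℕ => ∫ ω, (τ ((n + 1 : ℕ) : ℝ) ω : ℝ) ∂ℙ)
        = fun n : ℕ => ∫ ω, (τ ((n : ℝ) + 1) ω : ℝ) ∂ℙ := by
      funext n
      norm_num
    exact heq ▸ hseq
  have hfloor : Tendsto (fun κ : ℝ => ∫ ω, (τ ((⌊κ⌋₊ : ℕ) : ℝ) ω : ℝ) ∂ℙ) atTop (nhds 0) :=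
    hJ.comp tendsto_nat_floor_atTop
  refine tendsto_of_tendsto_of_tendsto_of_le_of_le' tendsto_const_nhds hfloor ?_ ?_
  · exact Eventually.of_forall fun κ => integral_nonneg fun ω => Nat.cast_nonneg _
  · filter_upwards [eventually_ge_atTop (1:ℝ)] with κ hκ1
    have hfl1 : 1 ≤ ⌊κ⌋₊ := Nat.le_floor (by exact_mod_cast hκ1)
    have hflpos : (0:ℝ) < ((⌊κ⌋₊ : ℕ) : ℝ) := by exact_mod_cast hfl1
    have hle : ((⌊κ⌋₊ : ℕ) : ℝ) ≤ κ := Nat.floor_le (by linarith)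
    exact integral_mono_ae (hInt κ (by linarith)) (hInt _ hflpos) (hmono _ κ hflpos hle)
end
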